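/- arXiv:2009.07760 — 6 statements merged into one kernel-verified Lean document; each statement's English description precedes it below -/
import Mathlib

section
/- Let A be a Hopf algebra over ℂ and let K, J be Hopf 2-cocycles for A. Then the comultiplication Δ of A is an injective algebra homomorphism Δ : _K A_J → _K A ⊗ A_J; that is, Δ is injective and for all a, b ∈ A one has Δ(_K m_J(a⊗b)) = (_K m ⊗ m_J)(Δ(a)·Δ(b) suitably arranged), i.e., Δ(_K m_J(a⊗b)) equals the product of Δ(a) and Δ(b) in the tensor product algebra _K A ⊗ A_J. -/
open TensorProduct LinearMap

noncomputable section

/-- Convolution product of linear forms on a coalgebra `C` over `ℂ`: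
`(F * G)(x) = Σ F(x₁) G(x₂)`. -/
def conv {C : Type} [AddCommGroup C] [Module ℂ C] [Coalgebra ℂ C]
    (F G : C →ₗ[ℂ] ℂ) : C →ₗ[ℂ] ℂ :=
  LinearMap.mul' ℂ ℂ ∘ₗ TensorProduct.map F G ∘ₗ Coalgebra.comul

/-- The left-hand side `Σ J(a₁b₁, c) J(a₂, b₂)` of the Hopf 2-cocycle identity,
as a linear form on `(A ⊗ A) ⊗ A`. -/
def cocycleL {A : Type} [Ring A] [Bialgebra ℂ A] (J : A ⊗[ℂ] A →ₗ[ℂ] ℂ) :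
    ((A ⊗[ℂ] A) ⊗[ℂ] A) →ₗ[ℂ] ℂ :=
  conv (J ∘ₗ TensorProduct.map (LinearMap.mul' ℂ A) LinearMap.id)
    (LinearMap.mul' ℂ ℂ ∘ₗ TensorProduct.map J Coalgebra.counit)

/-- The right-hand side `Σ J(a, b₁c₁) J(b₂, c₂)` of the Hopf 2-cocycle identity,
as a linear form on `(A ⊗ A) ⊗ A`. -/
def cocycleR {A : Type} [Ring A] [Bialgebra ℂ A] (J : A ⊗[ℂ] A →ₗ[ℂ] ℂ) :
    ((A ⊗[ℂ] A) ⊗[ℂ] A) →ₗ[ℂ] ℂ :=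
  conv (J ∘ₗ LinearMap.lTensor A (LinearMap.mul' ℂ A) ∘ₗ
      (TensorProduct.assoc ℂ A A A).toLinearMap)
    (LinearMap.mul' ℂ ℂ ∘ₗ TensorProduct.map Coalgebra.counit J ∘ₗ
      (TensorProduct.assoc ℂ A A A).toLinearMap)

/-- `J` is a Hopf 2-cocycle for `A` with convolution inverse `Jinv`:
`J * Jinv = Jinv * J = ε ⊗ ε`, the 2-cocycle identity
`Σ J(a₁b₁, c)J(a₂, b₂) = Σ J(a, b₁c₁)J(b₂, c₂)` holds, and `J(a,1) = ε(a) = J(1,a)`. -/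
def IsHopf2Cocycle {A : Type} [Ring A] [Bialgebra ℂ A]
    (J Jinv : A ⊗[ℂ] A →ₗ[ℂ] ℂ) : Prop :=
  conv J Jinv = Coalgebra.counit ∧ conv Jinv J = Coalgebra.counit ∧
  cocycleL J = cocycleR J ∧
  ∀ a : A, J (a ⊗ₜ[ℂ] 1) = Coalgebra.counit (R := ℂ) a ∧
    J ((1 : A) ⊗ₜ[ℂ] a) = Coalgebra.counit (R := ℂ) a

/-- The two-sided twisted multiplication
`_K m_J (a ⊗ b) = Σ Kinv(a₁,b₁) a₂b₂ J(a₃,b₃)`, where `Kinv` plays the role of the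
convolution inverse of the left cocycle `K`. -/
def twistMul {A : Type} [Ring A] [Bialgebra ℂ A] (Kinv J : A ⊗[ℂ] A →ₗ[ℂ] ℂ) :
    A ⊗[ℂ] A →ₗ[ℂ] A :=
  (TensorProduct.lid ℂ A).toLinearMap
    ∘ₗ LinearMap.lTensor ℂ (TensorProduct.rid ℂ A).toLinearMap
    ∘ₗ TensorProduct.map Kinv (TensorProduct.map (LinearMap.mul' ℂ A) J)
    ∘ₗ LinearMap.lTensor (A ⊗[ℂ] A) Coalgebra.comul
    ∘ₗ Coalgebra.comul

/-- The one-sided twisted multiplication `_K m (a ⊗ b) = Σ Kinv(a₁,b₁) a₂b₂`. -/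
def mulLeftTwist {A : Type} [Ring A] [Bialgebra ℂ A] (Kinv : A ⊗[ℂ] A →ₗ[ℂ] ℂ) :
    A ⊗[ℂ] A →ₗ[ℂ] A :=
  (TensorProduct.lid ℂ A).toLinearMap
    ∘ₗ TensorProduct.map Kinv (LinearMap.mul' ℂ A) ∘ₗ Coalgebra.comul

/-- The one-sided twisted multiplication `m_J (a ⊗ b) = Σ a₁b₁ J(a₂,b₂)`. -/
def mulRightTwist {A : Type} [Ring A] [Bialgebra ℂ A] (J : A ⊗[ℂ] A →ₗ[ℂ] ℂ) :
    A ⊗[ℂ] A →ₗ[ℂ] A :=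
  (TensorProduct.rid ℂ A).toLinearMap
    ∘ₗ TensorProduct.map (LinearMap.mul' ℂ A) J ∘ₗ Coalgebra.comul

/-- `p` is a primitive element: `Δ(p) = p⊗1 + 1⊗p`. -/
def IsPrimitive {A : Type} [Ring A] [Bialgebra ℂ A] (p : A) : Prop :=
  Coalgebra.comul (R := ℂ) p = p ⊗ₜ[ℂ] (1 : A) + (1 : A) ⊗ₜ[ℂ] p

/-- `x` is a grouplike element: `Δ(x) = x⊗x` and `ε(x) = 1`. -/
def IsGrouplike {A : Type} [Ring A] [Bialgebra ℂ A] (x : A) : Prop :=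
  Coalgebra.comul (R := ℂ) x = x ⊗ₜ[ℂ] x ∧ Coalgebra.counit (R := ℂ) x = 1


section AuxSweedler
open Coalgebra

lemma psi_apply_aux {C W : Type} [AddCommGroup C] [Module ℂ C] [Coalgebra ℂ C]
    [AddCommGroup W] [Module ℂ W]
    (G : C →ₗ[ℂ] ℂ) (ψ : C →ₗ[ℂ] W) (w : C) (rep : Coalgebra.Repr ℂ w (C × C)) :
    ((TensorProduct.rid ℂ W).toLinearMap ∘ₗ TensorProduct.map ψ G ∘ₗ Coalgebra.comul) w
      = ∑ k ∈ rep.index, G (rep.right k) • ψ (rep.left k) := by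
  simp only [LinearMap.comp_apply, LinearEquiv.coe_coe]
  rw [← rep.eq]
  simp [map_sum]

lemma key_sweedler_aux {C W : Type} [AddCommGroup C] [Module ℂ C] [Coalgebra ℂ C]
    [AddCommGroup W] [Module ℂ W]
    (F G : C →ₗ[ℂ] ℂ) (φ ψ : C →ₗ[ℂ] W) (t : C)
    (r : Coalgebra.Repr ℂ t (C × C))
    (rL : (i : r.ι) → Coalgebra.Repr ℂ (r.left i) (C × C))
    (rR : (i : r.ι) → Coalgebra.Repr ℂ (r.right i) (C × C))
    (rRL : (i : r.ι) → (j : (rR i).ι) → Coalgebra.Repr ℂ ((rR i).left j) (C × C)) :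
    ∑ i ∈ r.index, ∑ j ∈ (rR i).index, ∑ k ∈ (rRL i j).index,
      (F (r.left i) * G ((rR i).right j)) •
        (φ ((rRL i j).left k) ⊗ₜ[ℂ] ψ ((rRL i j).right k))
    = ∑ i ∈ r.index, ∑ j ∈ (rL i).index, ∑ k ∈ (rR i).index,
      (F ((rL i).left j) * G ((rR i).right k)) •
        (φ ((rL i).right j) ⊗ₜ[ℂ] ψ ((rR i).left k)) := by
  set Ψ : C →ₗ[ℂ] W :=
    (TensorProduct.rid ℂ W).toLinearMap ∘ₗ TensorProduct.map ψ G ∘ₗ Coalgebra.comul with hΨdef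
  have hA : ∀ i, ∑ j ∈ (rR i).index, ∑ k ∈ (rRL i j).index,
      G ((rR i).right j) • (φ ((rRL i j).left k) ⊗ₜ[ℂ] ψ ((rRL i j).right k))
      = ∑ j ∈ (rR i).index, φ ((rR i).left j) ⊗ₜ[ℂ] Ψ ((rR i).right j) := by
    intro i
    have h := Coalgebra.sum_tmul_tmul_eq (rR i) (rRL i) (fun j => Coalgebra.Repr.arbitrary ℂ ((rR i).right j))
    have h2 := congrArg
      (LinearMap.lTensor W (TensorProduct.rid ℂ W).toLinearMap ∘ₗ
        TensorProduct.map φ (TensorProduct.map ψ G)) h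
    simp only [map_sum, LinearMap.comp_apply, TensorProduct.map_tmul,
      LinearMap.lTensor_tmul, LinearEquiv.coe_coe, TensorProduct.rid_tmul,
      TensorProduct.tmul_smul] at h2
    rw [h2]
    refine Finset.sum_congr rfl fun j _ => ?_
    rw [hΨdef, psi_apply_aux G ψ ((rR i).right j) (Coalgebra.Repr.arbitrary ℂ ((rR i).right j)),
      TensorProduct.tmul_sum]
    simp [TensorProduct.tmul_smul]
  have hB : ∑ i ∈ r.index, F (r.left i) •
        (∑ j ∈ (rR i).index, φ ((rR i).left j) ⊗ₜ[ℂ] Ψ ((rR i).right j))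
      = ∑ i ∈ r.index, ∑ j ∈ (rL i).index,
        F ((rL i).left j) • (φ ((rL i).right j) ⊗ₜ[ℂ] Ψ (r.right i)) := by
    have h := Coalgebra.sum_tmul_tmul_eq r rL rR
    have h2 := congrArg
      ((TensorProduct.lid ℂ (W ⊗[ℂ] W)).toLinearMap ∘ₗ
        TensorProduct.map F (TensorProduct.map φ Ψ)) h
    simp only [map_sum, LinearMap.comp_apply, TensorProduct.map_tmul,
      LinearEquiv.coe_coe, TensorProduct.lid_tmul] at h2
    simp only [Finset.smul_sum]
    exact h2.symm
  calc
    ∑ i ∈ r.index, ∑ j ∈ (rR i).index, ∑ k ∈ (rRL i j).index,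
        (F (r.left i) * G ((rR i).right j)) •
          (φ ((rRL i j).left k) ⊗ₜ[ℂ] ψ ((rRL i j).right k))
      = ∑ i ∈ r.index, F (r.left i) • ∑ j ∈ (rR i).index, ∑ k ∈ (rRL i j).index,
          G ((rR i).right j) • (φ ((rRL i j).left k) ⊗ₜ[ℂ] ψ ((rRL i j).right k)) := by
        simp [Finset.smul_sum, mul_smul]
    _ = ∑ i ∈ r.index, F (r.left i) •
          (∑ j ∈ (rR i).index, φ ((rR i).left j) ⊗ₜ[ℂ] Ψ ((rR i).right j)) := by
        refine Finset.sum_congr rfl fun i _ => ?_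
        rw [hA i]
    _ = ∑ i ∈ r.index, ∑ j ∈ (rL i).index,
          F ((rL i).left j) • (φ ((rL i).right j) ⊗ₜ[ℂ] Ψ (r.right i)) := hB
    _ = ∑ i ∈ r.index, ∑ j ∈ (rL i).index, ∑ k ∈ (rR i).index,
        (F ((rL i).left j) * G ((rR i).right k)) •
          (φ ((rL i).right j) ⊗ₜ[ℂ] ψ ((rR i).left k)) := by
        refine Finset.sum_congr rfl fun i _ => Finset.sum_congr rfl fun j _ => ?_
        rw [hΨdef, psi_apply_aux G ψ (r.right i) (rR i), TensorProduct.tmul_sum,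
          Finset.smul_sum]
        simp [TensorProduct.tmul_smul, smul_smul]

lemma mul_eq_map_ttc_aux {A : Type} [Ring A] [Bialgebra ℂ A] (x y : A ⊗[ℂ] A) :
    x * y = TensorProduct.map (LinearMap.mul' ℂ A) (LinearMap.mul' ℂ A)
      (TensorProduct.tensorTensorTensorComm ℂ A A A A (x ⊗ₜ[ℂ] y)) := by
  induction x using TensorProduct.induction_on with
  | zero => simp
  | tmul p q =>
    induction y using TensorProduct.induction_on with
    | zero => simp
    | tmul u v => simp [Algebra.TensorProduct.tmul_mul_tmul]
    | add u v hu hv => simp [mul_add, tmul_add, hu, hv]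
  | add p q hp hq => simp [add_mul, add_tmul, hp, hq]

lemma comul_mul'_apply_aux {A : Type} [Ring A] [Bialgebra ℂ A] (w : A ⊗[ℂ] A) :
    Coalgebra.comul (R := ℂ) (LinearMap.mul' ℂ A w) =
      TensorProduct.map (LinearMap.mul' ℂ A) (LinearMap.mul' ℂ A)
        (Coalgebra.comul (R := ℂ) w) := by
  induction w using TensorProduct.induction_on with
  | zero => simp
  | tmul p q =>
    rw [LinearMap.mul'_apply, Bialgebra.comul_mul, mul_eq_map_ttc_aux]
    congr 1
  | add u v hu hv => simp [hu, hv]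

lemma twistMul_repr_aux {A : Type} [Ring A] [Bialgebra ℂ A]
    (Kinv J : A ⊗[ℂ] A →ₗ[ℂ] ℂ) (t : A ⊗[ℂ] A) (r : Coalgebra.Repr ℂ t ((A ⊗[ℂ] A) × (A ⊗[ℂ] A)))
    (rR : (i : r.ι) → Coalgebra.Repr ℂ (r.right i) ((A ⊗[ℂ] A) × (A ⊗[ℂ] A))) :
    twistMul Kinv J t = ∑ i ∈ r.index, ∑ j ∈ (rR i).index,
      (Kinv (r.left i) * J ((rR i).right j)) • (LinearMap.mul' ℂ A) ((rR i).left j) := by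
  rw [twistMul]
  simp only [LinearMap.comp_apply]
  rw [← r.eq]
  simp only [map_sum, LinearMap.lTensor_tmul]
  refine Finset.sum_congr rfl fun i _ => ?_
  rw [← (rR i).eq]
  simp [TensorProduct.tmul_sum, map_sum, smul_smul, mul_comm]

end AuxSweedler

/-- For Hopf 2-cocycles `K` and `J` for a Hopf algebra `A` over `ℂ`, the comultiplication
`Δ` of `A` is an injective algebra homomorphism `Δ : _K A_J → _K A ⊗ A_J`:
it is injective, and `Δ(_K m_J(a⊗b))` equals the product of `Δ(a)` and `Δ(b)` in the
tensor product algebra `_K A ⊗ A_J`. -/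
theorem comul_injective_algebraHom_twisted {A : Type} [Ring A] [HopfAlgebra ℂ A]
    (K Kinv J Jinv : A ⊗[ℂ] A →ₗ[ℂ] ℂ)
    (hK : IsHopf2Cocycle K Kinv) (hJ : IsHopf2Cocycle J Jinv) :
    Function.Injective (Coalgebra.comul (R := ℂ) (A := A)) ∧
    ∀ a b : A,
      Coalgebra.comul (R := ℂ) (twistMul Kinv J (a ⊗ₜ[ℂ] b)) =
        TensorProduct.map (mulLeftTwist Kinv) (mulRightTwist J)
          (TensorProduct.tensorTensorTensorComm ℂ A A A A
            (Coalgebra.comul (R := ℂ) a ⊗ₜ[ℂ] Coalgebra.comul (R := ℂ) b)) := by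
  constructor
  · intro x y h
    have h2 := congrArg
      (fun z => (TensorProduct.lid ℂ A) ((Coalgebra.counit (R := ℂ)).rTensor A z)) h
    simpa using h2
  · intro a b
    set t : A ⊗[ℂ] A := a ⊗ₜ[ℂ] b with ht
    have hcom : TensorProduct.tensorTensorTensorComm ℂ A A A A
        (Coalgebra.comul (R := ℂ) a ⊗ₜ[ℂ] Coalgebra.comul (R := ℂ) b)
        = Coalgebra.comul (R := ℂ) t := by
      simp [ht, TensorProduct.comul_tmul, TensorProduct.AlgebraTensorModule.tensorTensorTensorComm_eq]
    rw [hcom]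
    set r := Coalgebra.Repr.arbitrary ℂ t
    set rL : (i : r.ι) → Coalgebra.Repr ℂ (r.left i) ((A ⊗[ℂ] A) × (A ⊗[ℂ] A)) := fun i => Coalgebra.Repr.arbitrary ℂ (r.left i) with hrL
    set rR : (i : r.ι) → Coalgebra.Repr ℂ (r.right i) ((A ⊗[ℂ] A) × (A ⊗[ℂ] A)) := fun i => Coalgebra.Repr.arbitrary ℂ (r.right i) with hrR
    set rRL : (i : r.ι) → (j : (rR i).ι) → Coalgebra.Repr ℂ ((rR i).left j) ((A ⊗[ℂ] A) × (A ⊗[ℂ] A)) :=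
      fun i j => Coalgebra.Repr.arbitrary ℂ ((rR i).left j) with hrRL
    have hL : Coalgebra.comul (R := ℂ) (twistMul Kinv J t)
        = ∑ i ∈ r.index, ∑ j ∈ (rR i).index, ∑ k ∈ (rRL i j).index,
          (Kinv (r.left i) * J ((rR i).right j)) •
            ((LinearMap.mul' ℂ A) ((rRL i j).left k) ⊗ₜ[ℂ]
              (LinearMap.mul' ℂ A) ((rRL i j).right k)) := by
      rw [twistMul_repr_aux Kinv J t r rR, map_sum]
      refine Finset.sum_congr rfl fun i _ => ?_
      rw [map_sum]
      refine Finset.sum_congr rfl fun j _ => ?_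
      rw [map_smul, comul_mul'_apply_aux, ← (rRL i j).eq]
      simp [Finset.smul_sum]
    have hR : TensorProduct.map (mulLeftTwist Kinv) (mulRightTwist J)
          (Coalgebra.comul (R := ℂ) t)
        = ∑ i ∈ r.index, ∑ j ∈ (rL i).index, ∑ k ∈ (rR i).index,
          (Kinv ((rL i).left j) * J ((rR i).right k)) •
            ((LinearMap.mul' ℂ A) ((rL i).right j) ⊗ₜ[ℂ]
              (LinearMap.mul' ℂ A) ((rR i).left k)) := by
      rw [← r.eq, map_sum]
      refine Finset.sum_congr rfl fun i _ => ?_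
      rw [TensorProduct.map_tmul]
      have h1 : mulLeftTwist Kinv (r.left i) = ∑ j ∈ (rL i).index,
          Kinv ((rL i).left j) • (LinearMap.mul' ℂ A) ((rL i).right j) := by
        rw [mulLeftTwist]
        simp only [LinearMap.comp_apply]
        rw [← (rL i).eq]
        simp [map_sum]
      have h2 : mulRightTwist J (r.right i) = ∑ k ∈ (rR i).index,
          J ((rR i).right k) • (LinearMap.mul' ℂ A) ((rR i).left k) := by
        rw [mulRightTwist]
        simp only [LinearMap.comp_apply]
        rw [← (rR i).eq]
        simp [map_sum]
      rw [h1, h2, TensorProduct.sum_tmul]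
      refine Finset.sum_congr rfl fun j _ => ?_
      rw [TensorProduct.tmul_sum]
      refine Finset.sum_congr rfl fun k _ => ?_
      simp [TensorProduct.smul_tmul', smul_smul, mul_comm]
    rw [hL, hR]
    exact key_sweedler_aux Kinv J (LinearMap.mul' ℂ A) (LinearMap.mul' ℂ A) t r rL rR rRL

end
end

section
/- Let A be a commutative Hopf algebra over ℂ, J a Hopf 2-cocycle for A, and define R^J := J₂₁⁻¹ * J (the convolution product of the bilinear forms J₂₁⁻¹(a,b) := J⁻¹(b,a) and J). If p ∈ A is primitive, then for every a ∈ A: R^J(p,a) = (J − J₂₁)(p,a) = (J₂₁⁻¹ − J⁻¹)(p,a), where J₂₁(a,b) := J(b,a). -/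
open TensorProduct LinearMap

noncomputable section

section Aux

variable {A : Type} [CommRing A] [HopfAlgebra ℂ A]

local notation "ε" => Coalgebra.counit (R := ℂ)
local notation "Δ" => Coalgebra.comul (R := ℂ)

/-- `Σ ε(a₁) L(a₂) = L a`. -/
lemma contract_left (L : A →ₗ[ℂ] ℂ) (a : A) :
    LinearMap.mul' ℂ ℂ (TensorProduct.map (Coalgebra.counit (R := ℂ)) L (Δ a)) = L a := by
  rw [← LinearMap.lTensor_comp_rTensor, LinearMap.comp_apply,
    Coalgebra.rTensor_counit_comul]
  simp

/-- `Σ L(a₁) ε(a₂) = L a`. -/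
lemma contract_right (L : A →ₗ[ℂ] ℂ) (a : A) :
    LinearMap.mul' ℂ ℂ (TensorProduct.map L (Coalgebra.counit (R := ℂ)) (Δ a)) = L a := by
  rw [← LinearMap.rTensor_comp_lTensor, LinearMap.comp_apply,
    Coalgebra.lTensor_counit_comul]
  simp

set_option synthInstance.maxHeartbeats 1000000 in
lemma fuse_left (F G : A ⊗[ℂ] A →ₗ[ℂ] ℂ) (u₁ u₂ : A) (c : A ⊗[ℂ] A) :
    LinearMap.mul' ℂ ℂ (TensorProduct.map F G
      (TensorProduct.tensorTensorTensorComm ℂ A A A A ((u₁ ⊗ₜ[ℂ] u₂) ⊗ₜ[ℂ] c))) =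
    LinearMap.mul' ℂ ℂ (TensorProduct.map (F ∘ₗ TensorProduct.mk ℂ A A u₁)
      (G ∘ₗ TensorProduct.mk ℂ A A u₂) c) := by
  induction c using TensorProduct.induction_on with
  | zero => simp only [TensorProduct.tmul_zero, LinearEquiv.map_zero, map_zero]
  | tmul x y => simp
  | add x y hx hy =>
      rw [TensorProduct.tmul_add, map_add, map_add, map_add, map_add, hx, hy]
      exact (map_add _ _ _).symm

set_option synthInstance.maxHeartbeats 1000000 in
lemma fuse_right (F G : A ⊗[ℂ] A →ₗ[ℂ] ℂ) (u₁ u₂ : A) (c : A ⊗[ℂ] A) :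
    LinearMap.mul' ℂ ℂ (TensorProduct.map F G
      (TensorProduct.tensorTensorTensorComm ℂ A A A A (c ⊗ₜ[ℂ] (u₁ ⊗ₜ[ℂ] u₂)))) =
    LinearMap.mul' ℂ ℂ (TensorProduct.map (F ∘ₗ (TensorProduct.mk ℂ A A).flip u₁)
      (G ∘ₗ (TensorProduct.mk ℂ A A).flip u₂) c) := by
  induction c using TensorProduct.induction_on with
  | zero => simp only [TensorProduct.zero_tmul, LinearEquiv.map_zero, map_zero]
  | tmul x y => simp
  | add x y hx hy =>
      rw [TensorProduct.add_tmul, map_add, map_add, map_add, map_add, hx, hy]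
      exact (map_add _ _ _).symm

lemma conv_tmul (F G : A ⊗[ℂ] A →ₗ[ℂ] ℂ) (x y : A) :
    conv F G (x ⊗ₜ[ℂ] y) = LinearMap.mul' ℂ ℂ (TensorProduct.map F G
      (TensorProduct.tensorTensorTensorComm ℂ A A A A (Δ x ⊗ₜ[ℂ] Δ y))) := by
  simp [conv, TensorProduct.comul_def, TensorProduct.AlgebraTensorModule.tensorTensorTensorComm_eq]

lemma conv_primitive_fst (F G : A ⊗[ℂ] A →ₗ[ℂ] ℂ)
    (hF : ∀ x : A, F ((1 : A) ⊗ₜ[ℂ] x) = ε x)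
    (hG : ∀ x : A, G ((1 : A) ⊗ₜ[ℂ] x) = ε x)
    {p : A} (hp : IsPrimitive p) (a : A) :
    conv F G (p ⊗ₜ[ℂ] a) = F (p ⊗ₜ[ℂ] a) + G (p ⊗ₜ[ℂ] a) := by
  have hF' : F ∘ₗ TensorProduct.mk ℂ A A 1 = Coalgebra.counit := by ext x; simpa using hF x
  have hG' : G ∘ₗ TensorProduct.mk ℂ A A 1 = Coalgebra.counit := by ext x; simpa using hG x
  rw [conv_tmul, hp, TensorProduct.add_tmul, map_add, map_add, map_add,
    fuse_left, fuse_left, hF', hG', contract_right, contract_left]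
  simp

lemma conv_primitive_snd (F G : A ⊗[ℂ] A →ₗ[ℂ] ℂ)
    (hF : ∀ x : A, F (x ⊗ₜ[ℂ] (1 : A)) = ε x)
    (hG : ∀ x : A, G (x ⊗ₜ[ℂ] (1 : A)) = ε x)
    {p : A} (hp : IsPrimitive p) (a : A) :
    conv F G (a ⊗ₜ[ℂ] p) = F (a ⊗ₜ[ℂ] p) + G (a ⊗ₜ[ℂ] p) := by
  have hF' : F ∘ₗ (TensorProduct.mk ℂ A A).flip 1 = Coalgebra.counit := by
    ext x; simpa using hF x
  have hG' : G ∘ₗ (TensorProduct.mk ℂ A A).flip 1 = Coalgebra.counit := by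
    ext x; simpa using hG x
  rw [conv_tmul, hp, TensorProduct.tmul_add, map_add, map_add, map_add,
    fuse_right, fuse_right, hF', hG', contract_right, contract_left]
  simp

lemma conv_one_fst (F G : A ⊗[ℂ] A →ₗ[ℂ] ℂ)
    (hF : ∀ x : A, F ((1 : A) ⊗ₜ[ℂ] x) = ε x) (x : A) :
    conv F G ((1 : A) ⊗ₜ[ℂ] x) = G ((1 : A) ⊗ₜ[ℂ] x) := by
  have hF' : F ∘ₗ TensorProduct.mk ℂ A A 1 = Coalgebra.counit := by ext y; simpa using hF y
  have h1 : Δ (1 : A) = (1 : A) ⊗ₜ[ℂ] (1 : A) := by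
    rw [Bialgebra.comul_one]; rfl
  rw [conv_tmul, h1, fuse_left, hF', contract_left]
  simp

lemma conv_one_snd (F G : A ⊗[ℂ] A →ₗ[ℂ] ℂ)
    (hF : ∀ x : A, F (x ⊗ₜ[ℂ] (1 : A)) = ε x) (x : A) :
    conv F G (x ⊗ₜ[ℂ] (1 : A)) = G (x ⊗ₜ[ℂ] (1 : A)) := by
  have hF' : F ∘ₗ (TensorProduct.mk ℂ A A).flip 1 = Coalgebra.counit := by
    ext y; simpa using hF y
  have h1 : Δ (1 : A) = (1 : A) ⊗ₜ[ℂ] (1 : A) := by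
    rw [Bialgebra.comul_one]; rfl
  rw [conv_tmul, h1, fuse_right, hF', contract_left]
  simp

end Aux

/-- Let `A` be a commutative Hopf algebra over `ℂ`, `J` a Hopf 2-cocycle with convolution
inverse `Jinv`, and `R^J := J₂₁⁻¹ * J` where `J₂₁⁻¹(a,b) = J⁻¹(b,a)`. If `p` is primitive
then for every `a`: `R^J(p,a) = (J − J₂₁)(p,a) = (J₂₁⁻¹ − J⁻¹)(p,a)`. -/

theorem RJ_primitive_eq {A : Type} [CommRing A] [HopfAlgebra ℂ A]
    (J Jinv : A ⊗[ℂ] A →ₗ[ℂ] ℂ) (hJ : IsHopf2Cocycle J Jinv)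
    (p : A) (hp : IsPrimitive p) :
    ∀ a : A,
      conv (Jinv ∘ₗ (TensorProduct.comm ℂ A A).toLinearMap) J (p ⊗ₜ[ℂ] a) =
          J (p ⊗ₜ[ℂ] a) - J (a ⊗ₜ[ℂ] p) ∧
      J (p ⊗ₜ[ℂ] a) - J (a ⊗ₜ[ℂ] p) = Jinv (a ⊗ₜ[ℂ] p) - Jinv (p ⊗ₜ[ℂ] a) := by
  intro a
  obtain ⟨hconv1, hconv2, hcoc, hnorm⟩ := hJ
  have hJ1L : ∀ x : A, J ((1 : A) ⊗ₜ[ℂ] x) = Coalgebra.counit (R := ℂ) x := fun x => (hnorm x).2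
  have hJ1R : ∀ x : A, J (x ⊗ₜ[ℂ] (1 : A)) = Coalgebra.counit (R := ℂ) x := fun x => (hnorm x).1
  have hJinv1L : ∀ x : A, Jinv ((1 : A) ⊗ₜ[ℂ] x) = Coalgebra.counit (R := ℂ) x := by
    intro x
    have := conv_one_fst J Jinv hJ1L x
    rw [hconv1] at this
    rw [← this]
    simp [TensorProduct.counit_def]
  have hJinv1R : ∀ x : A, Jinv (x ⊗ₜ[ℂ] (1 : A)) = Coalgebra.counit (R := ℂ) x := by
    intro x
    have := conv_one_snd J Jinv hJ1R x
    rw [hconv1] at this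
    rw [← this]
    simp [TensorProduct.counit_def]
  -- ε(p) • 1 = 0
  have hsm : (Coalgebra.counit (R := ℂ) p) • (1 : A) = 0 := by
    have h := Coalgebra.rTensor_counit_comul (R := ℂ) p
    rw [hp] at h
    simp only [map_add, LinearMap.rTensor_tmul, Bialgebra.counit_one] at h
    have h2 : (Coalgebra.counit (R := ℂ) p) ⊗ₜ[ℂ] (1 : A) = 0 := by
      have := congrArg (fun z => z - (1 : ℂ) ⊗ₜ[ℂ] p) h
      simpa using this
    have := congrArg (TensorProduct.lid ℂ A) h2
    simpa using this
  rcases smul_eq_zero.mp hsm with hεp | h1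
  · -- main case : ε(p) = 0
    have hcount : ∀ x : A, Coalgebra.counit (R := ℂ) (p ⊗ₜ[ℂ] x) = 0 := by
      intro x
      simp [TensorProduct.counit_def, hεp]
    have hcount' : ∀ x : A, Coalgebra.counit (R := ℂ) (x ⊗ₜ[ℂ] p) = 0 := by
      intro x
      simp [TensorProduct.counit_def, hεp]
    have e1 : J (p ⊗ₜ[ℂ] a) + Jinv (p ⊗ₜ[ℂ] a) = 0 := by
      have := conv_primitive_fst J Jinv hJ1L hJinv1L hp a
      rw [hconv1] at this
      rw [← this, hcount a]
    have e2 : J (a ⊗ₜ[ℂ] p) + Jinv (a ⊗ₜ[ℂ] p) = 0 := by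
      have := conv_primitive_snd J Jinv hJ1R hJinv1R hp a
      rw [hconv1] at this
      rw [← this, hcount' a]
    have e3 : conv (Jinv ∘ₗ (TensorProduct.comm ℂ A A).toLinearMap) J (p ⊗ₜ[ℂ] a) =
        Jinv (a ⊗ₜ[ℂ] p) + J (p ⊗ₜ[ℂ] a) := by
      have := conv_primitive_fst (Jinv ∘ₗ (TensorProduct.comm ℂ A A).toLinearMap) J
        (fun x => by simpa using hJinv1R x) hJ1L hp a
      simpa using this
    constructor
    · rw [e3]; linear_combination e2
    · linear_combination e1 - e2
  · -- degenerate case : 1 = 0 in A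
    have : Subsingleton A := subsingleton_of_zero_eq_one h1.symm
    have hp0 : p = (0 : A) := Subsingleton.elim _ _
    subst hp0
    simp


end
end

section
/- Let A be a commutative Hopf algebra over ℂ, J a Hopf 2-cocycle for A, Q := J − J₂₁ (where J₂₁(a,b) := J(b,a)), and p ∈ A primitive. Then for every a ∈ A, the commutator of p and a in the twisted Hopf algebra _J A_J is [p,a] := _J m_J(p⊗a) − _J m_J(a⊗p) = Σ a₁ Q(p,a₂) − Σ Q(p,a₁) a₂. -/
open TensorProduct LinearMap

noncomputable section

namespace TwistAux

open Coalgebra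

variable {A : Type} [CommRing A] [HopfAlgebra ℂ A]
variable {ι ι' : Type*}

lemma sum_counit_smul_right (x : A) (r : Coalgebra.Repr ℂ x ι) :
    ∑ i ∈ r.index, counit (R := ℂ) (r.left i) • r.right i = x := by
  have := congrArg (TensorProduct.lid ℂ A) (Coalgebra.sum_counit_tmul_eq r)
  simp only [map_sum, TensorProduct.lid_tmul, one_smul] at this
  exact this

lemma sum_counit_smul_left (x : A) (r : Coalgebra.Repr ℂ x ι) :
    ∑ i ∈ r.index, counit (R := ℂ) (r.right i) • r.left i = x := by
  have := congrArg (TensorProduct.rid ℂ A) (Coalgebra.sum_tmul_counit_eq r)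
  simp only [map_sum, TensorProduct.rid_tmul, one_smul] at this
  exact this

lemma comul_tmul (x y : A) : Coalgebra.comul (R := ℂ) (x ⊗ₜ[ℂ] y) =
    TensorProduct.tensorTensorTensorComm ℂ A A A A
      (Coalgebra.comul (R := ℂ) x ⊗ₜ[ℂ] Coalgebra.comul (R := ℂ) y) := by
  simp [TensorProduct.AlgebraTensorModule.tensorTensorTensorComm_eq]

lemma counit_tmul (x y : A) : Coalgebra.counit (R := ℂ) (x ⊗ₜ[ℂ] y) =
    counit (R := ℂ) x * counit (R := ℂ) y := by
  simp [mul_comm]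

lemma conv_tmul_expand (F G : A ⊗[ℂ] A →ₗ[ℂ] ℂ) (x y : A)
    (rx : Coalgebra.Repr ℂ x ι) (ry : Coalgebra.Repr ℂ y ι') :
    conv F G (x ⊗ₜ[ℂ] y) = ∑ i ∈ rx.index, ∑ j ∈ ry.index,
      F (rx.left i ⊗ₜ[ℂ] ry.left j) * G (rx.right i ⊗ₜ[ℂ] ry.right j) := by
  simp only [conv, LinearMap.comp_apply, comul_tmul, ← rx.eq, ← ry.eq,
    TensorProduct.sum_tmul, TensorProduct.tmul_sum, map_sum,
    TensorProduct.tensorTensorTensorComm_tmul, TensorProduct.map_tmul,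
    LinearMap.mul'_apply]
  exact Finset.sum_comm

/-- A representation of `1 : A`. -/
def reprOne : Coalgebra.Repr ℂ (1 : A) Unit where
  index := Finset.univ
  left := fun _ => 1
  right := fun _ => 1
  eq := by simp [Bialgebra.comul_one, Algebra.TensorProduct.one_def]

lemma comul_p_tmul {p : A} (hp : IsPrimitive p) (x : A) (r : Coalgebra.Repr ℂ x ι) :
    Coalgebra.comul (R := ℂ) (p ⊗ₜ[ℂ] x) = ∑ i ∈ r.index,
      ((p ⊗ₜ[ℂ] r.left i) ⊗ₜ[ℂ] ((1:A) ⊗ₜ[ℂ] r.right i)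
        + ((1:A) ⊗ₜ[ℂ] r.left i) ⊗ₜ[ℂ] (p ⊗ₜ[ℂ] r.right i)) := by
  rw [comul_tmul, hp, ← r.eq]
  simp [TensorProduct.add_tmul, TensorProduct.tmul_add, TensorProduct.tmul_sum, map_sum,
    map_add, TensorProduct.sum_tmul, Finset.sum_add_distrib]

lemma comul_tmul_p {p : A} (hp : IsPrimitive p) (x : A) (r : Coalgebra.Repr ℂ x ι) :
    Coalgebra.comul (R := ℂ) (x ⊗ₜ[ℂ] p) = ∑ i ∈ r.index,
      ((r.left i ⊗ₜ[ℂ] p) ⊗ₜ[ℂ] (r.right i ⊗ₜ[ℂ] (1:A))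
        + (r.left i ⊗ₜ[ℂ] (1:A)) ⊗ₜ[ℂ] (r.right i ⊗ₜ[ℂ] p)) := by
  rw [comul_tmul, hp, ← r.eq]
  simp [TensorProduct.add_tmul, TensorProduct.tmul_add, TensorProduct.tmul_sum, map_sum,
    map_add, TensorProduct.sum_tmul, Finset.sum_add_distrib]

lemma comul_one_tmul (y : A) (ry : Coalgebra.Repr ℂ y ι) :
    Coalgebra.comul (R := ℂ) ((1:A) ⊗ₜ[ℂ] y) = ∑ j ∈ ry.index,
      ((1:A) ⊗ₜ[ℂ] ry.left j) ⊗ₜ[ℂ] ((1:A) ⊗ₜ[ℂ] ry.right j) := by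
  rw [comul_tmul, ← ry.eq]
  simp [Bialgebra.comul_one, Algebra.TensorProduct.one_def,
    TensorProduct.tmul_sum, map_sum]

lemma comul_tmul_one (y : A) (ry : Coalgebra.Repr ℂ y ι) :
    Coalgebra.comul (R := ℂ) (y ⊗ₜ[ℂ] (1:A)) = ∑ j ∈ ry.index,
      (ry.left j ⊗ₜ[ℂ] (1:A)) ⊗ₜ[ℂ] (ry.right j ⊗ₜ[ℂ] (1:A)) := by
  rw [comul_tmul, ← ry.eq]
  simp [Bialgebra.comul_one, Algebra.TensorProduct.one_def,
    TensorProduct.sum_tmul, map_sum]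

lemma twistMul_p_tmul (K L : A ⊗[ℂ] A →ₗ[ℂ] ℂ) {p : A} (hp : IsPrimitive p) (x : A)
    (r : Coalgebra.Repr ℂ x ι) (r' : ∀ i, Coalgebra.Repr ℂ (r.right i) ι') :
    twistMul K L (p ⊗ₜ[ℂ] x) = ∑ i ∈ r.index, ∑ j ∈ (r' i).index,
      ( K (p ⊗ₜ[ℂ] r.left i) • (L ((1:A) ⊗ₜ[ℂ] (r' i).right j) • (r' i).left j)
      + K ((1:A) ⊗ₜ[ℂ] r.left i) • (L ((1:A) ⊗ₜ[ℂ] (r' i).right j) • (p * (r' i).left j))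
      + K ((1:A) ⊗ₜ[ℂ] r.left i) • (L (p ⊗ₜ[ℂ] (r' i).right j) • (r' i).left j)) := by
  simp only [twistMul, LinearMap.comp_apply, comul_p_tmul hp x r, map_sum, map_add,
    LinearMap.lTensor_tmul, comul_one_tmul _ (r' _), comul_p_tmul hp _ (r' _),
    TensorProduct.tmul_sum, TensorProduct.tmul_add, TensorProduct.map_tmul,
    LinearMap.mul'_apply, LinearEquiv.coe_coe, TensorProduct.rid_tmul,
    TensorProduct.lid_tmul, one_mul, TensorProduct.tmul_smul, map_smul,
    Finset.sum_add_distrib, smul_add]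
  simp_rw [smul_smul, mul_comm]
  abel

lemma twistMul_tmul_p (K L : A ⊗[ℂ] A →ₗ[ℂ] ℂ) {p : A} (hp : IsPrimitive p) (x : A)
    (r : Coalgebra.Repr ℂ x ι) (r' : ∀ i, Coalgebra.Repr ℂ (r.right i) ι') :
    twistMul K L (x ⊗ₜ[ℂ] p) = ∑ i ∈ r.index, ∑ j ∈ (r' i).index,
      ( K (r.left i ⊗ₜ[ℂ] p) • (L ((r' i).right j ⊗ₜ[ℂ] (1:A)) • (r' i).left j)
      + K (r.left i ⊗ₜ[ℂ] (1:A)) • (L ((r' i).right j ⊗ₜ[ℂ] (1:A)) • ((r' i).left j * p))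
      + K (r.left i ⊗ₜ[ℂ] (1:A)) • (L ((r' i).right j ⊗ₜ[ℂ] p) • (r' i).left j)) := by
  simp only [twistMul, LinearMap.comp_apply, comul_tmul_p hp x r, map_sum, map_add,
    LinearMap.lTensor_tmul, comul_tmul_one _ (r' _), comul_tmul_p hp _ (r' _),
    TensorProduct.tmul_sum, TensorProduct.tmul_add, TensorProduct.map_tmul,
    LinearMap.mul'_apply, LinearEquiv.coe_coe, TensorProduct.rid_tmul,
    TensorProduct.lid_tmul, mul_one, TensorProduct.tmul_smul, map_smul,
    Finset.sum_add_distrib, smul_add]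
  simp_rw [smul_smul, mul_comm]
  abel

lemma sum_F_mul_right (F : A ⊗[ℂ] A →ₗ[ℂ] ℂ) (w : A) {ι : Type*} (s : Finset ι)
    (c : ι → ℂ) (v : ι → A) :
    ∑ i ∈ s, F (w ⊗ₜ[ℂ] v i) * c i = F (w ⊗ₜ[ℂ] ∑ i ∈ s, c i • v i) := by
  simp [TensorProduct.tmul_sum, map_sum, TensorProduct.tmul_smul, map_smul,
    smul_eq_mul, mul_comm]

lemma sum_mul_F_right (F : A ⊗[ℂ] A →ₗ[ℂ] ℂ) (w : A) {ι : Type*} (s : Finset ι)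
    (c : ι → ℂ) (v : ι → A) :
    ∑ i ∈ s, c i * F (w ⊗ₜ[ℂ] v i) = F (w ⊗ₜ[ℂ] ∑ i ∈ s, c i • v i) := by
  simp [TensorProduct.tmul_sum, map_sum, TensorProduct.tmul_smul, map_smul, smul_eq_mul]

lemma sum_F_mul_left (F : A ⊗[ℂ] A →ₗ[ℂ] ℂ) (w : A) {ι : Type*} (s : Finset ι)
    (c : ι → ℂ) (v : ι → A) :
    ∑ i ∈ s, F (v i ⊗ₜ[ℂ] w) * c i = F ((∑ i ∈ s, c i • v i) ⊗ₜ[ℂ] w) := by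
  simp [TensorProduct.sum_tmul, map_sum, ← TensorProduct.smul_tmul', map_smul,
    smul_eq_mul, mul_comm]

lemma sum_mul_F_left (F : A ⊗[ℂ] A →ₗ[ℂ] ℂ) (w : A) {ι : Type*} (s : Finset ι)
    (c : ι → ℂ) (v : ι → A) :
    ∑ i ∈ s, c i * F (v i ⊗ₜ[ℂ] w) = F ((∑ i ∈ s, c i • v i) ⊗ₜ[ℂ] w) := by
  simp [TensorProduct.sum_tmul, map_sum, ← TensorProduct.smul_tmul', map_smul, smul_eq_mul]

lemma transfer {M : Type*} [AddCommGroup M] [Module ℂ M] (Φ : A ⊗[ℂ] A →ₗ[ℂ] M)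
    (x : A) (r : Coalgebra.Repr ℂ x ι) :
    ∑ i ∈ r.index, counit (R := ℂ) (r.left i) • Φ (Coalgebra.comul (R := ℂ) (r.right i))
      = ∑ i ∈ r.index, Φ (r.left i ⊗ₜ[ℂ] r.right i) := by
  have h1 : ∑ i ∈ r.index, counit (R := ℂ) (r.left i)
        • Φ (Coalgebra.comul (R := ℂ) (r.right i))
      = Φ (Coalgebra.comul (R := ℂ)
          (∑ i ∈ r.index, counit (R := ℂ) (r.left i) • r.right i)) := by
    simp [map_sum, map_smul]
  rw [h1, sum_counit_smul_right x r, ← r.eq, map_sum]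

/-- The map `u ⊗ v ↦ L(p ⊗ v) • u`. -/
def phiR (L : A ⊗[ℂ] A →ₗ[ℂ] ℂ) (p : A) : A ⊗[ℂ] A →ₗ[ℂ] A :=
  (TensorProduct.rid ℂ A).toLinearMap
    ∘ₗ TensorProduct.map LinearMap.id (L ∘ₗ TensorProduct.mk ℂ A A p)

@[simp] lemma phiR_tmul (L : A ⊗[ℂ] A →ₗ[ℂ] ℂ) (p u v : A) :
    phiR L p (u ⊗ₜ[ℂ] v) = L (p ⊗ₜ[ℂ] v) • u := by
  simp [phiR]

/-- The map `u ⊗ v ↦ L(v ⊗ p) • u`. -/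
def phiL (L : A ⊗[ℂ] A →ₗ[ℂ] ℂ) (p : A) : A ⊗[ℂ] A →ₗ[ℂ] A :=
  (TensorProduct.rid ℂ A).toLinearMap
    ∘ₗ TensorProduct.map LinearMap.id (L ∘ₗ (TensorProduct.mk ℂ A A).flip p)

@[simp] lemma phiL_tmul (L : A ⊗[ℂ] A →ₗ[ℂ] ℂ) (p u v : A) :
    phiL L p (u ⊗ₜ[ℂ] v) = L (v ⊗ₜ[ℂ] p) • u := by
  simp [phiL]

lemma transfer_right (L : A ⊗[ℂ] A →ₗ[ℂ] ℂ) (p x : A) (r : Coalgebra.Repr ℂ x ι)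
    (r' : ∀ i, Coalgebra.Repr ℂ (r.right i) ι') :
    ∑ i ∈ r.index, counit (R := ℂ) (r.left i) •
        ∑ j ∈ (r' i).index, L (p ⊗ₜ[ℂ] (r' i).right j) • (r' i).left j
      = ∑ i ∈ r.index, L (p ⊗ₜ[ℂ] r.right i) • r.left i := by
  have key := transfer (phiR L p) x r
  simp only [phiR_tmul] at key
  rw [← key]
  refine Finset.sum_congr rfl fun i _ => ?_
  congr 1
  rw [← (r' i).eq, map_sum]
  simp

lemma transfer_left (L : A ⊗[ℂ] A →ₗ[ℂ] ℂ) (p x : A) (r : Coalgebra.Repr ℂ x ι)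
    (r' : ∀ i, Coalgebra.Repr ℂ (r.right i) ι') :
    ∑ i ∈ r.index, counit (R := ℂ) (r.left i) •
        ∑ j ∈ (r' i).index, L ((r' i).right j ⊗ₜ[ℂ] p) • (r' i).left j
      = ∑ i ∈ r.index, L (r.right i ⊗ₜ[ℂ] p) • r.left i := by
  have key := transfer (phiL L p) x r
  simp only [phiL_tmul] at key
  rw [← key]
  refine Finset.sum_congr rfl fun i _ => ?_
  congr 1
  rw [← (r' i).eq, map_sum]
  simp

end TwistAux

open TwistAux Coalgebra in
/-- Let `A` be a commutative Hopf algebra over `ℂ`, `J` a Hopf 2-cocycle with convolution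
inverse `Jinv`, `Q := J − J₂₁`, and `p` primitive. Then for every `a`, the commutator of
`p` and `a` in `_J A_J` is `[p,a] = Σ a₁ Q(p,a₂) − Σ Q(p,a₁) a₂`. -/
theorem twistMul_commutator_primitive {A : Type} [CommRing A] [HopfAlgebra ℂ A]
    (J Jinv : A ⊗[ℂ] A →ₗ[ℂ] ℂ) (hJ : IsHopf2Cocycle J Jinv)
    (Q : A ⊗[ℂ] A →ₗ[ℂ] ℂ) (hQ : Q = J - J ∘ₗ (TensorProduct.comm ℂ A A).toLinearMap)
    (p : A) (hp : IsPrimitive p) :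
    ∀ a : A,
      twistMul Jinv J (p ⊗ₜ[ℂ] a) - twistMul Jinv J (a ⊗ₜ[ℂ] p) =
        TensorProduct.rid ℂ A
          (TensorProduct.map LinearMap.id (Q ∘ₗ TensorProduct.mk ℂ A A p)
            (Coalgebra.comul (R := ℂ) a)) -
        TensorProduct.lid ℂ A
          (TensorProduct.map (Q ∘ₗ TensorProduct.mk ℂ A A p) LinearMap.id
            (Coalgebra.comul (R := ℂ) a)) := by
  obtain ⟨hJJi, hJiJ, hco, hunit⟩ := hJ
  rcases subsingleton_or_nontrivial A with hA | hA
  · intro a; exact Subsingleton.elim _ _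
  -- the counit of a primitive element vanishes
  have hεp : counit (R := ℂ) p = 0 := by
    have h := Coalgebra.rTensor_counit_comul (R := ℂ) p
    rw [hp] at h
    simp only [map_add, LinearMap.rTensor_tmul, Bialgebra.counit_one] at h
    have h2 : counit (R := ℂ) p ⊗ₜ[ℂ] (1:A) = 0 := by
      have := congrArg (fun z => z - (1:ℂ) ⊗ₜ[ℂ] p) h
      simpa using this
    have h3 := congrArg (TensorProduct.lid ℂ A) h2
    simp only [TensorProduct.lid_tmul, map_zero] at h3
    rcases smul_eq_zero.mp h3 with h4 | h4
    · exact h4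
    · exact absurd h4 one_ne_zero
  -- an explicit representation of `comul p`
  let rp : Coalgebra.Repr ℂ p Bool :=
    { index := Finset.univ
      left := fun b => if b then p else 1
      right := fun b => if b then 1 else p
      eq := by rw [hp]; simp [Fintype.sum_bool] }
  have hJ1 : ∀ z : A, J ((1:A) ⊗ₜ[ℂ] z) = counit (R := ℂ) z := fun z => (hunit z).2
  have hJ1' : ∀ z : A, J (z ⊗ₜ[ℂ] (1:A)) = counit (R := ℂ) z := fun z => (hunit z).1
  -- `Jinv` is also unital
  have hJi1 : ∀ z : A, Jinv ((1:A) ⊗ₜ[ℂ] z) = counit (R := ℂ) z := by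
    intro z
    have h := LinearMap.congr_fun hJJi ((1:A) ⊗ₜ[ℂ] z)
    rw [conv_tmul_expand J Jinv 1 z reprOne (Coalgebra.Repr.arbitrary ℂ z)] at h
    simp only [reprOne, Finset.univ_unique, Finset.sum_singleton] at h
    rw [TwistAux.counit_tmul, Bialgebra.counit_one, one_mul] at h
    simp only [hJ1] at h
    rw [sum_mul_F_right Jinv 1, sum_counit_smul_right] at h
    exact h
  have hJi1' : ∀ z : A, Jinv (z ⊗ₜ[ℂ] (1:A)) = counit (R := ℂ) z := by
    intro z
    have h := LinearMap.congr_fun hJJi (z ⊗ₜ[ℂ] (1:A))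
    rw [conv_tmul_expand J Jinv z 1 (Coalgebra.Repr.arbitrary ℂ z) reprOne] at h
    simp only [reprOne, Finset.univ_unique, Finset.sum_singleton] at h
    rw [TwistAux.counit_tmul, Bialgebra.counit_one, mul_one] at h
    simp only [hJ1'] at h
    rw [sum_mul_F_left Jinv 1, sum_counit_smul_right] at h
    exact h
  -- `Jinv` agrees with `-J` when one argument is `p`
  have hJip : ∀ z : A, Jinv (p ⊗ₜ[ℂ] z) = - J (p ⊗ₜ[ℂ] z) := by
    intro z
    have h := LinearMap.congr_fun hJJi (p ⊗ₜ[ℂ] z)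
    rw [conv_tmul_expand J Jinv p z rp (Coalgebra.Repr.arbitrary ℂ z)] at h
    rw [TwistAux.counit_tmul, hεp, zero_mul] at h
    simp only [rp, Fintype.sum_bool, Bool.false_eq_true, if_true, if_false] at h
    simp only [hJi1, hJ1] at h
    rw [sum_F_mul_right J p, sum_counit_smul_left, sum_mul_F_right Jinv p,
      sum_counit_smul_right] at h
    exact eq_neg_of_add_eq_zero_right h
  have hJip' : ∀ z : A, Jinv (z ⊗ₜ[ℂ] p) = - J (z ⊗ₜ[ℂ] p) := by
    intro z
    have h := LinearMap.congr_fun hJJi (z ⊗ₜ[ℂ] p)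
    rw [conv_tmul_expand J Jinv z p (Coalgebra.Repr.arbitrary ℂ z) rp] at h
    rw [TwistAux.counit_tmul, hεp, mul_zero] at h
    simp only [rp, Fintype.sum_bool, Bool.false_eq_true, if_true, if_false, Finset.sum_add_distrib] at h
    simp only [hJi1', hJ1'] at h
    rw [sum_F_mul_left J p, sum_counit_smul_left, sum_mul_F_left Jinv p,
      sum_counit_smul_right] at h
    exact eq_neg_of_add_eq_zero_right h
  intro a
  set r := Coalgebra.Repr.arbitrary ℂ a with hr
  set r' := fun i => Coalgebra.Repr.arbitrary ℂ (r.right i) with hr'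
  -- expansion of `twistMul Jinv J (p ⊗ₜ a)`
  have e1 : twistMul Jinv J (p ⊗ₜ[ℂ] a) =
      ∑ i ∈ r.index, Jinv (p ⊗ₜ[ℂ] r.left i) • r.right i + p * a
        + ∑ i ∈ r.index, J (p ⊗ₜ[ℂ] r.right i) • r.left i := by
    rw [twistMul_p_tmul Jinv J hp a r r']
    have step : ∀ i ∈ r.index, ∑ j ∈ (r' i).index,
        ( Jinv (p ⊗ₜ[ℂ] r.left i) • (J ((1:A) ⊗ₜ[ℂ] (r' i).right j) • (r' i).left j)
        + Jinv ((1:A) ⊗ₜ[ℂ] r.left i) •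
            (J ((1:A) ⊗ₜ[ℂ] (r' i).right j) • (p * (r' i).left j))
        + Jinv ((1:A) ⊗ₜ[ℂ] r.left i) • (J (p ⊗ₜ[ℂ] (r' i).right j) • (r' i).left j)) =
        Jinv (p ⊗ₜ[ℂ] r.left i) • r.right i
          + counit (R := ℂ) (r.left i) • (p * r.right i)
          + counit (R := ℂ) (r.left i) •
              ∑ j ∈ (r' i).index, J (p ⊗ₜ[ℂ] (r' i).right j) • (r' i).left j := by
      intro i _
      rw [Finset.sum_add_distrib, Finset.sum_add_distrib]
      congr 1
      · congr 1
        · rw [← Finset.smul_sum]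
          congr 1
          simp only [hJ1]
          exact sum_counit_smul_left _ (r' i)
        · simp only [hJi1, hJ1]
          rw [← Finset.smul_sum]
          congr 1
          simp_rw [← mul_smul_comm]
          rw [← Finset.mul_sum, sum_counit_smul_left _ (r' i)]
      · simp only [hJi1]
        rw [← Finset.smul_sum]
    rw [Finset.sum_congr rfl step, Finset.sum_add_distrib, Finset.sum_add_distrib]
    congr 1
    · congr 1
      simp_rw [← mul_smul_comm]
      rw [← Finset.mul_sum, sum_counit_smul_right a r]
    · exact transfer_right J p a r r'
  -- expansion of `twistMul Jinv J (a ⊗ₜ p)`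
  have e2 : twistMul Jinv J (a ⊗ₜ[ℂ] p) =
      ∑ i ∈ r.index, Jinv (r.left i ⊗ₜ[ℂ] p) • r.right i + a * p
        + ∑ i ∈ r.index, J (r.right i ⊗ₜ[ℂ] p) • r.left i := by
    rw [twistMul_tmul_p Jinv J hp a r r']
    have step : ∀ i ∈ r.index, ∑ j ∈ (r' i).index,
        ( Jinv (r.left i ⊗ₜ[ℂ] p) • (J ((r' i).right j ⊗ₜ[ℂ] (1:A)) • (r' i).left j)
        + Jinv (r.left i ⊗ₜ[ℂ] (1:A)) •
            (J ((r' i).right j ⊗ₜ[ℂ] (1:A)) • ((r' i).left j * p))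
        + Jinv (r.left i ⊗ₜ[ℂ] (1:A)) • (J ((r' i).right j ⊗ₜ[ℂ] p) • (r' i).left j)) =
        Jinv (r.left i ⊗ₜ[ℂ] p) • r.right i
          + counit (R := ℂ) (r.left i) • (r.right i * p)
          + counit (R := ℂ) (r.left i) •
              ∑ j ∈ (r' i).index, J ((r' i).right j ⊗ₜ[ℂ] p) • (r' i).left j := by
      intro i _
      rw [Finset.sum_add_distrib, Finset.sum_add_distrib]
      congr 1
      · congr 1
        · rw [← Finset.smul_sum]
          congr 1
          simp only [hJ1']
          exact sum_counit_smul_left _ (r' i)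
        · simp only [hJi1', hJ1']
          rw [← Finset.smul_sum]
          congr 1
          simp_rw [← smul_mul_assoc]
          rw [← Finset.sum_mul, sum_counit_smul_left _ (r' i)]
      · simp only [hJi1']
        rw [← Finset.smul_sum]
    rw [Finset.sum_congr rfl step, Finset.sum_add_distrib, Finset.sum_add_distrib]
    congr 1
    · congr 1
      simp_rw [← smul_mul_assoc]
      rw [← Finset.sum_mul, sum_counit_smul_right a r]
    · exact transfer_left J p a r r'
  -- the right-hand side
  have hR1 : TensorProduct.rid ℂ A
      (TensorProduct.map LinearMap.id (Q ∘ₗ TensorProduct.mk ℂ A A p)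
        (Coalgebra.comul (R := ℂ) a)) =
      ∑ i ∈ r.index, Q (p ⊗ₜ[ℂ] r.right i) • r.left i := by
    rw [← r.eq, map_sum, map_sum]
    simp
  have hR2 : TensorProduct.lid ℂ A
      (TensorProduct.map (Q ∘ₗ TensorProduct.mk ℂ A A p) LinearMap.id
        (Coalgebra.comul (R := ℂ) a)) =
      ∑ i ∈ r.index, Q (p ⊗ₜ[ℂ] r.left i) • r.right i := by
    rw [← r.eq, map_sum, map_sum]
    simp
  rw [e1, e2, hR1, hR2]
  simp only [hJip, hJip', hQ, LinearMap.sub_apply, LinearMap.comp_apply,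
    LinearEquiv.coe_coe, TensorProduct.comm_tmul, sub_smul, neg_smul,
    Finset.sum_sub_distrib, Finset.sum_neg_distrib]
  rw [mul_comm p a]
  abel

end
end

section
/- Let A be a commutative Hopf algebra over ℂ, J a Hopf 2-cocycle for A, and B ⊆ A a Hopf subalgebra with augmentation ideal B⁺ := B ∩ ker ε. Suppose a, b ∈ A satisfy Δ(a) − a⊗1 − 1⊗a ∈ B⁺ ⊗ B⁺ and Δ(b) − b⊗1 − 1⊗b ∈ B⁺ ⊗ B⁺. Then the commutator [a,b] := _J m_J(a⊗b) − _J m_J(b⊗a) in the twisted Hopf algebra _J A_J lies in B⁺. -/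
open TensorProduct LinearMap

noncomputable section

namespace TwistAux

open Coalgebra

section Generic

variable {M M' N N' P P' Q Q' V : Type}
  [AddCommGroup M] [Module ℂ M] [AddCommGroup M'] [Module ℂ M']
  [AddCommGroup N] [Module ℂ N] [AddCommGroup N'] [Module ℂ N']
  [AddCommGroup P] [Module ℂ P] [AddCommGroup P'] [Module ℂ P']
  [AddCommGroup Q] [Module ℂ Q] [AddCommGroup Q'] [Module ℂ Q']
  [AddCommGroup V] [Module ℂ V]

theorem map_tensor_mem (f : M ⊗[ℂ] N →ₗ[ℂ] V) (g₁ : M' →ₗ[ℂ] M) (g₂ : N' →ₗ[ℂ] N)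
    (S : Submodule ℂ V) (h : ∀ x y, f (g₁ x ⊗ₜ[ℂ] g₂ y) ∈ S) :
    ∀ w, f (TensorProduct.map g₁ g₂ w) ∈ S := by
  intro w
  induction w using TensorProduct.induction_on with
  | zero => simpa using S.zero_mem
  | tmul x y => simpa using h x y
  | add u v hu hv => rw [map_add, map_add]; exact S.add_mem hu hv

theorem map_tensor_eq_zero (f : M ⊗[ℂ] N →ₗ[ℂ] V) (g₁ : M' →ₗ[ℂ] M) (g₂ : N' →ₗ[ℂ] N)
    (h : ∀ x y, f (g₁ x ⊗ₜ[ℂ] g₂ y) = 0) :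
    ∀ w, f (TensorProduct.map g₁ g₂ w) = 0 := by
  intro w
  have := map_tensor_mem f g₁ g₂ ⊥ (fun x y => by simp [h]) w
  simpa using this

theorem map_tensor_mem₄ (f : (M ⊗[ℂ] N) ⊗[ℂ] (P ⊗[ℂ] Q) →ₗ[ℂ] V)
    (g₁ : M' →ₗ[ℂ] M) (g₂ : N' →ₗ[ℂ] N) (g₃ : P' →ₗ[ℂ] P) (g₄ : Q' →ₗ[ℂ] Q)
    (S : Submodule ℂ V)
    (h : ∀ x y z w, f ((g₁ x ⊗ₜ[ℂ] g₂ y) ⊗ₜ[ℂ] (g₃ z ⊗ₜ[ℂ] g₄ w)) ∈ S) :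
    ∀ u v, f (TensorProduct.map g₁ g₂ u ⊗ₜ[ℂ] TensorProduct.map g₃ g₄ v) ∈ S := by
  intro u v
  have hmain := map_tensor_mem
    (f ∘ₗ (TensorProduct.mk ℂ (M ⊗[ℂ] N) (P ⊗[ℂ] Q)).flip (TensorProduct.map g₃ g₄ v))
    g₁ g₂ S (fun x y => ?_) u
  · simpa using hmain
  · have hinner := map_tensor_mem
      (f ∘ₗ TensorProduct.mk ℂ (M ⊗[ℂ] N) (P ⊗[ℂ] Q) (g₁ x ⊗ₜ[ℂ] g₂ y))
      g₃ g₄ S (fun z w => by simpa using h x y z w) v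
    simpa using hinner

end Generic

variable {A : Type} [CommRing A] [HopfAlgebra ℂ A]

theorem comulAA :
    (Coalgebra.comul (R := ℂ) (A := A ⊗[ℂ] A)) =
      (TensorProduct.tensorTensorTensorComm ℂ A A A A).toLinearMap ∘ₗ
        TensorProduct.map Coalgebra.comul Coalgebra.comul := by
  rw [Bialgebra.TensorProduct.comul_eq_algHom_toLinearMap]; rfl

theorem counit_tmulC (x y : A) :
    Coalgebra.counit (R := ℂ) (x ⊗ₜ[ℂ] y) =
      Coalgebra.counit (R := ℂ) x * Coalgebra.counit (R := ℂ) y := by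
  rw [TensorProduct.counit_tmul, smul_eq_mul, mul_comm]

/-- `Vmap L ((z₁ ⊗ z₂) ⊗ (w₁ ⊗ w₂)) = L(z₂ ⊗ w₂) • (z₁ * w₁)`. -/
def Vmap (L : A ⊗[ℂ] A →ₗ[ℂ] ℂ) : (A ⊗[ℂ] A) ⊗[ℂ] (A ⊗[ℂ] A) →ₗ[ℂ] A :=
  (TensorProduct.rid ℂ A).toLinearMap
    ∘ₗ TensorProduct.map (LinearMap.mul' ℂ A) L
    ∘ₗ (TensorProduct.tensorTensorTensorComm ℂ A A A A).toLinearMap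

theorem Vmap_tmul (L : A ⊗[ℂ] A →ₗ[ℂ] ℂ) (z₁ z₂ w₁ w₂ : A) :
    Vmap L ((z₁ ⊗ₜ[ℂ] z₂) ⊗ₜ[ℂ] (w₁ ⊗ₜ[ℂ] w₂)) = L (z₂ ⊗ₜ[ℂ] w₂) • (z₁ * w₁) := by
  simp [Vmap, rid_tmul, mul'_apply]

/-- `Cmap K L ((x ⊗ z) ⊗ (y ⊗ w)) = K(x ⊗ y) * L(z ⊗ w)`. -/
def Cmap (K L : A ⊗[ℂ] A →ₗ[ℂ] ℂ) : (A ⊗[ℂ] A) ⊗[ℂ] (A ⊗[ℂ] A) →ₗ[ℂ] ℂ :=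
  LinearMap.mul' ℂ ℂ
    ∘ₗ TensorProduct.map K L
    ∘ₗ (TensorProduct.tensorTensorTensorComm ℂ A A A A).toLinearMap

theorem Cmap_tmul (K L : A ⊗[ℂ] A →ₗ[ℂ] ℂ) (x z y w : A) :
    Cmap K L ((x ⊗ₜ[ℂ] z) ⊗ₜ[ℂ] (y ⊗ₜ[ℂ] w)) = K (x ⊗ₜ[ℂ] y) * L (z ⊗ₜ[ℂ] w) := by
  simp [Cmap, mul'_apply]

/-- `Tmap K L ((x ⊗ z) ⊗ (y ⊗ w)) = K(x ⊗ y) • Vmap L (Δz ⊗ Δw)`. -/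
def Tmap (K L : A ⊗[ℂ] A →ₗ[ℂ] ℂ) : (A ⊗[ℂ] A) ⊗[ℂ] (A ⊗[ℂ] A) →ₗ[ℂ] A :=
  (TensorProduct.lid ℂ A).toLinearMap
    ∘ₗ TensorProduct.map K (Vmap L ∘ₗ TensorProduct.map Coalgebra.comul Coalgebra.comul)
    ∘ₗ (TensorProduct.tensorTensorTensorComm ℂ A A A A).toLinearMap

theorem Tmap_tmul (K L : A ⊗[ℂ] A →ₗ[ℂ] ℂ) (x z y w : A) :
    Tmap K L ((x ⊗ₜ[ℂ] z) ⊗ₜ[ℂ] (y ⊗ₜ[ℂ] w)) =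
      K (x ⊗ₜ[ℂ] y) • Vmap L (Coalgebra.comul (R := ℂ) z ⊗ₜ[ℂ] Coalgebra.comul (R := ℂ) w) := by
  simp only [Tmap, LinearMap.comp_apply, LinearEquiv.coe_coe,
    TensorProduct.tensorTensorTensorComm_tmul, TensorProduct.map_tmul, TensorProduct.lid_tmul]

theorem conv_eq (K L : A ⊗[ℂ] A →ₗ[ℂ] ℂ) (x y : A) :
    conv K L (x ⊗ₜ[ℂ] y) =
      Cmap K L (Coalgebra.comul (R := ℂ) x ⊗ₜ[ℂ] Coalgebra.comul (R := ℂ) y) := by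
  simp only [conv, Cmap, LinearMap.comp_apply, comulAA, LinearEquiv.coe_coe,
    TensorProduct.map_tmul]

theorem twistMul_eq (K L : A ⊗[ℂ] A →ₗ[ℂ] ℂ) (x y : A) :
    twistMul K L (x ⊗ₜ[ℂ] y) =
      Tmap K L (Coalgebra.comul (R := ℂ) x ⊗ₜ[ℂ] Coalgebra.comul (R := ℂ) y) := by
  have h : (((TensorProduct.lid ℂ A).toLinearMap
      ∘ₗ LinearMap.lTensor ℂ (TensorProduct.rid ℂ A).toLinearMap
      ∘ₗ TensorProduct.map K (TensorProduct.map (LinearMap.mul' ℂ A) L)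
      ∘ₗ LinearMap.lTensor (A ⊗[ℂ] A) (Coalgebra.comul (R := ℂ) (A := A ⊗[ℂ] A)))
      ∘ₗ (TensorProduct.tensorTensorTensorComm ℂ A A A A).toLinearMap)
      = Tmap K L := by
    apply TensorProduct.ext_fourfold'
    intro x' z' y' w'
    simp only [Tmap, Vmap, LinearMap.comp_apply, LinearEquiv.coe_coe,
      TensorProduct.tensorTensorTensorComm_tmul, LinearMap.lTensor_tmul,
      TensorProduct.map_tmul, TensorProduct.lid_tmul, comulAA]
  have h2 : Coalgebra.comul (R := ℂ) (x ⊗ₜ[ℂ] y) =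
      (TensorProduct.tensorTensorTensorComm ℂ A A A A).toLinearMap
        (Coalgebra.comul (R := ℂ) x ⊗ₜ[ℂ] Coalgebra.comul (R := ℂ) y) := by
    rw [comulAA]; simp
  have h3 := LinearMap.congr_fun h
    (Coalgebra.comul (R := ℂ) x ⊗ₜ[ℂ] Coalgebra.comul (R := ℂ) y)
  simp only [LinearMap.comp_apply] at h3
  rw [twistMul]
  simp only [LinearMap.comp_apply]
  rw [h2]
  exact h3

section WithB

variable (B : Subalgebra ℂ A) (Bplus : Submodule ℂ A)

theorem mem_bplus_iff
    (hBplus : Bplus = Subalgebra.toSubmodule B ⊓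
      LinearMap.ker (Coalgebra.counit (R := ℂ) (A := A))) (y : A) :
    y ∈ Bplus ↔ y ∈ Subalgebra.toSubmodule B ⊓
      LinearMap.ker (Coalgebra.counit (R := ℂ) (A := A)) := by
  rw [hBplus]

theorem counit_bplus
    (hBplus : Bplus = Subalgebra.toSubmodule B ⊓
      LinearMap.ker (Coalgebra.counit (R := ℂ) (A := A))) (p : Bplus) :
    Coalgebra.counit (R := ℂ) (p : A) = 0 := by
  have hp := (mem_bplus_iff B Bplus hBplus (p : A)).mp p.2
  exact (Submodule.mem_inf.mp hp).2

theorem bplus_mem_B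
    (hBplus : Bplus = Subalgebra.toSubmodule B ⊓
      LinearMap.ker (Coalgebra.counit (R := ℂ) (A := A))) (p : Bplus) :
    (p : A) ∈ B := by
  have hp := (mem_bplus_iff B Bplus hBplus (p : A)).mp p.2
  exact (Subalgebra.mem_toSubmodule B).mp (Submodule.mem_inf.mp hp).1

theorem mul_mem_bplus
    (hBplus : Bplus = Subalgebra.toSubmodule B ⊓
      LinearMap.ker (Coalgebra.counit (R := ℂ) (A := A))) (p q : Bplus) :
    (p : A) * (q : A) ∈ Bplus := by
  rw [mem_bplus_iff B Bplus hBplus]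
  refine Submodule.mem_inf.mpr ⟨?_, ?_⟩
  · exact (Subalgebra.mem_toSubmodule B).mpr
      (B.mul_mem (bplus_mem_B B Bplus hBplus p) (bplus_mem_B B Bplus hBplus q))
  · rw [LinearMap.mem_ker, Bialgebra.counit_mul, counit_bplus B Bplus hBplus p, zero_mul]

theorem counit_eq_zero
    (hBplus : Bplus = Subalgebra.toSubmodule B ⊓
      LinearMap.ker (Coalgebra.counit (R := ℂ) (A := A))) {a : A}
    (ha : Coalgebra.comul (R := ℂ) a - a ⊗ₜ[ℂ] (1 : A) - (1 : A) ⊗ₜ[ℂ] a ∈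
      LinearMap.range (TensorProduct.map Bplus.subtype Bplus.subtype)) :
    Coalgebra.counit (R := ℂ) a = 0 := by
  obtain ⟨w, hw⟩ := ha
  have ca : Coalgebra.comul (R := ℂ) a = a ⊗ₜ[ℂ] (1 : A) + (1 : A) ⊗ₜ[ℂ] a +
      TensorProduct.map Bplus.subtype Bplus.subtype w := by rw [hw]; abel
  have hE : (LinearMap.mul' ℂ ℂ)
      (TensorProduct.map (Coalgebra.counit (R := ℂ) (A := A)) (Coalgebra.counit (R := ℂ) (A := A))
        (Coalgebra.comul (R := ℂ) a)) = Coalgebra.counit (R := ℂ) a := by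
    rw [← LinearMap.rTensor_comp_lTensor, LinearMap.comp_apply,
      Coalgebra.lTensor_counit_comul]
    simp [mul'_apply]
  have h0 : (LinearMap.mul' ℂ ℂ)
      (TensorProduct.map (Coalgebra.counit (R := ℂ) (A := A)) (Coalgebra.counit (R := ℂ) (A := A))
        (TensorProduct.map Bplus.subtype Bplus.subtype w)) = 0 := by
    have := map_tensor_eq_zero
      ((LinearMap.mul' ℂ ℂ) ∘ₗ
        TensorProduct.map (Coalgebra.counit (R := ℂ) (A := A)) (Coalgebra.counit (R := ℂ) (A := A)))
      Bplus.subtype Bplus.subtype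
      (fun p q => by simp [mul'_apply, counit_bplus B Bplus hBplus]) w
    simpa using this
  have hcongr := congrArg (fun z => (LinearMap.mul' ℂ ℂ)
      (TensorProduct.map (Coalgebra.counit (R := ℂ) (A := A))
        (Coalgebra.counit (R := ℂ) (A := A)) z)) ca
  simp only [hE, map_add, TensorProduct.map_tmul, mul'_apply, Bialgebra.counit_one,
    mul_one, one_mul, h0, add_zero] at hcongr
  linear_combination -hcongr

theorem comul_decomp
    (hB : ∀ b ∈ B, Coalgebra.comul (R := ℂ) b ∈
      LinearMap.range (TensorProduct.map (Subalgebra.toSubmodule B).subtype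
        (Subalgebra.toSubmodule B).subtype))
    (hBplus : Bplus = Subalgebra.toSubmodule B ⊓
      LinearMap.ker (Coalgebra.counit (R := ℂ) (A := A)))
    {x : A} (hx : x ∈ B) (hεx : Coalgebra.counit (R := ℂ) x = 0) :
    ∃ w : Bplus ⊗[ℂ] Bplus, Coalgebra.comul (R := ℂ) x =
      x ⊗ₜ[ℂ] (1 : A) + (1 : A) ⊗ₜ[ℂ] x +
        TensorProduct.map Bplus.subtype Bplus.subtype w := by
  set c : A →ₗ[ℂ] A :=
    (LinearMap.toSpanSingleton ℂ A 1) ∘ₗ (Coalgebra.counit (R := ℂ) (A := A)) with hc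
  set e : A →ₗ[ℂ] A := LinearMap.id - c with he
  have hex : ∀ y : A, e y = y - (Coalgebra.counit (R := ℂ) y) • (1 : A) := by
    intro y
    simp [he, hc, LinearMap.sub_apply, LinearMap.comp_apply,
      LinearMap.toSpanSingleton_apply]
  have hee : TensorProduct.map e e (Coalgebra.comul (R := ℂ) x) =
      Coalgebra.comul (R := ℂ) x - x ⊗ₜ[ℂ] (1 : A) - (1 : A) ⊗ₜ[ℂ] x := by
    rw [← LinearMap.rTensor_comp_lTensor, LinearMap.comp_apply]
    have h1 : LinearMap.lTensor A e (Coalgebra.comul (R := ℂ) x) =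
        Coalgebra.comul (R := ℂ) x - x ⊗ₜ[ℂ] (1 : A) := by
      rw [he, LinearMap.lTensor_sub, LinearMap.lTensor_id, LinearMap.sub_apply,
        LinearMap.id_apply, hc, LinearMap.lTensor_comp, LinearMap.comp_apply,
        Coalgebra.lTensor_counit_comul]
      simp [LinearMap.lTensor_tmul, LinearMap.toSpanSingleton_apply]
    rw [h1, map_sub]
    have h2 : LinearMap.rTensor A e (Coalgebra.comul (R := ℂ) x) =
        Coalgebra.comul (R := ℂ) x - (1 : A) ⊗ₜ[ℂ] x := by
      rw [he, LinearMap.rTensor_sub, LinearMap.rTensor_id, LinearMap.sub_apply,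
        LinearMap.id_apply, hc, LinearMap.rTensor_comp, LinearMap.comp_apply,
        Coalgebra.rTensor_counit_comul]
      simp [LinearMap.rTensor_tmul, LinearMap.toSpanSingleton_apply]
    have h3 : LinearMap.rTensor A e (x ⊗ₜ[ℂ] (1 : A)) = x ⊗ₜ[ℂ] (1 : A) := by
      rw [LinearMap.rTensor_tmul, hex, hεx]
      simp
    rw [h2, h3]
    abel
  obtain ⟨t, ht⟩ := hB x hx
  have hm : TensorProduct.map e e (Coalgebra.comul (R := ℂ) x) ∈
      LinearMap.range (TensorProduct.map Bplus.subtype Bplus.subtype) := by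
    rw [← ht]
    refine map_tensor_mem (TensorProduct.map e e)
      (Subalgebra.toSubmodule B).subtype (Subalgebra.toSubmodule B).subtype
      (LinearMap.range (TensorProduct.map Bplus.subtype Bplus.subtype))
      (fun u v => ?_) t
    have hmem : ∀ u : Subalgebra.toSubmodule B, e (u : A) ∈ Bplus := by
      intro u
      rw [hBplus]
      refine Submodule.mem_inf.mpr ⟨?_, ?_⟩
      · rw [hex]
        exact Submodule.sub_mem _ u.2 (Submodule.smul_mem _ _
          ((Subalgebra.mem_toSubmodule B).mpr (one_mem B)))
      · rw [LinearMap.mem_ker, hex]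
        simp
    exact ⟨(⟨e (u : A), hmem u⟩ : Bplus) ⊗ₜ[ℂ] (⟨e (v : A), hmem v⟩ : Bplus), by
      simp [TensorProduct.map_tmul]⟩
  obtain ⟨w, hw⟩ := hm
  refine ⟨w, ?_⟩
  rw [hw, hee]
  abel

theorem comul_bplus
    (hB : ∀ b ∈ B, Coalgebra.comul (R := ℂ) b ∈
      LinearMap.range (TensorProduct.map (Subalgebra.toSubmodule B).subtype
        (Subalgebra.toSubmodule B).subtype))
    (hBplus : Bplus = Subalgebra.toSubmodule B ⊓
      LinearMap.ker (Coalgebra.counit (R := ℂ) (A := A))) (q : Bplus) :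
    ∃ w : Bplus ⊗[ℂ] Bplus, Coalgebra.comul (R := ℂ) (q : A) =
      (q : A) ⊗ₜ[ℂ] (1 : A) + (1 : A) ⊗ₜ[ℂ] (q : A) +
        TensorProduct.map Bplus.subtype Bplus.subtype w :=
  comul_decomp B Bplus hB hBplus (bplus_mem_B B Bplus hBplus q)
    (counit_bplus B Bplus hBplus q)

variable {L K : A ⊗[ℂ] A →ₗ[ℂ] ℂ}

theorem V_one_right
    (hL : ∀ x : A, L (x ⊗ₜ[ℂ] 1) = Coalgebra.counit (R := ℂ) x ∧
      L ((1 : A) ⊗ₜ[ℂ] x) = Coalgebra.counit (R := ℂ) x)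
    (hB : ∀ b ∈ B, Coalgebra.comul (R := ℂ) b ∈
      LinearMap.range (TensorProduct.map (Subalgebra.toSubmodule B).subtype
        (Subalgebra.toSubmodule B).subtype))
    (hBplus : Bplus = Subalgebra.toSubmodule B ⊓
      LinearMap.ker (Coalgebra.counit (R := ℂ) (A := A))) (q : Bplus) :
    Vmap L (Coalgebra.comul (R := ℂ) (q : A) ⊗ₜ[ℂ] Coalgebra.comul (R := ℂ) (1 : A)) ∈
      Bplus := by
  obtain ⟨wq, hq⟩ := comul_bplus B Bplus hB hBplus q
  rw [hq, Bialgebra.comul_one, Algebra.TensorProduct.one_def]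
  simp only [TensorProduct.add_tmul, map_add]
  refine Submodule.add_mem _ (Submodule.add_mem _ ?_ ?_) ?_
  · rw [Vmap_tmul, mul_one]
    exact Submodule.smul_mem _ _ q.2
  · rw [Vmap_tmul, (hL (q : A)).1, counit_bplus B Bplus hBplus q, zero_smul]
    exact Submodule.zero_mem _
  · have := map_tensor_mem
      ((Vmap L) ∘ₗ (TensorProduct.mk ℂ (A ⊗[ℂ] A) (A ⊗[ℂ] A)).flip
        ((1 : A) ⊗ₜ[ℂ] (1 : A)))
      Bplus.subtype Bplus.subtype Bplus (fun u v => ?_) wq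
    · simpa using this
    · simp only [LinearMap.comp_apply, LinearMap.flip_apply, TensorProduct.mk_apply,
        Submodule.coe_subtype, Vmap_tmul, mul_one]
      exact Submodule.smul_mem _ _ u.2

theorem V_one_left
    (hL : ∀ x : A, L (x ⊗ₜ[ℂ] 1) = Coalgebra.counit (R := ℂ) x ∧
      L ((1 : A) ⊗ₜ[ℂ] x) = Coalgebra.counit (R := ℂ) x)
    (hB : ∀ b ∈ B, Coalgebra.comul (R := ℂ) b ∈
      LinearMap.range (TensorProduct.map (Subalgebra.toSubmodule B).subtype
        (Subalgebra.toSubmodule B).subtype))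
    (hBplus : Bplus = Subalgebra.toSubmodule B ⊓
      LinearMap.ker (Coalgebra.counit (R := ℂ) (A := A))) (s : Bplus) :
    Vmap L (Coalgebra.comul (R := ℂ) (1 : A) ⊗ₜ[ℂ] Coalgebra.comul (R := ℂ) (s : A)) ∈
      Bplus := by
  obtain ⟨ws, hs⟩ := comul_bplus B Bplus hB hBplus s
  rw [hs, Bialgebra.comul_one, Algebra.TensorProduct.one_def]
  simp only [TensorProduct.tmul_add, map_add]
  refine Submodule.add_mem _ (Submodule.add_mem _ ?_ ?_) ?_
  · rw [Vmap_tmul, one_mul]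
    exact Submodule.smul_mem _ _ s.2
  · rw [Vmap_tmul, (hL (s : A)).2, counit_bplus B Bplus hBplus s, zero_smul]
    exact Submodule.zero_mem _
  · have := map_tensor_mem
      ((Vmap L) ∘ₗ TensorProduct.mk ℂ (A ⊗[ℂ] A) (A ⊗[ℂ] A) ((1 : A) ⊗ₜ[ℂ] (1 : A)))
      Bplus.subtype Bplus.subtype Bplus (fun u v => ?_) ws
    · simpa using this
    · simp only [LinearMap.comp_apply, TensorProduct.mk_apply, Submodule.coe_subtype,
        Vmap_tmul, one_mul]
      exact Submodule.smul_mem _ _ u.2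

theorem V_qs
    (hB : ∀ b ∈ B, Coalgebra.comul (R := ℂ) b ∈
      LinearMap.range (TensorProduct.map (Subalgebra.toSubmodule B).subtype
        (Subalgebra.toSubmodule B).subtype))
    (hBplus : Bplus = Subalgebra.toSubmodule B ⊓
      LinearMap.ker (Coalgebra.counit (R := ℂ) (A := A))) (q s : Bplus) :
    Vmap L (Coalgebra.comul (R := ℂ) (q : A) ⊗ₜ[ℂ] Coalgebra.comul (R := ℂ) (s : A)) -
      L ((q : A) ⊗ₜ[ℂ] (s : A)) • (1 : A) ∈ Bplus := by
  obtain ⟨wq, hq⟩ := comul_bplus B Bplus hB hBplus q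
  obtain ⟨ws, hs⟩ := comul_bplus B Bplus hB hBplus s
  rw [hq, hs]
  have hE : Vmap L
      (((q : A) ⊗ₜ[ℂ] (1 : A) + (1 : A) ⊗ₜ[ℂ] (q : A) +
        TensorProduct.map Bplus.subtype Bplus.subtype wq) ⊗ₜ[ℂ]
       ((s : A) ⊗ₜ[ℂ] (1 : A) + (1 : A) ⊗ₜ[ℂ] (s : A) +
        TensorProduct.map Bplus.subtype Bplus.subtype ws)) -
      L ((q : A) ⊗ₜ[ℂ] (s : A)) • (1 : A) =
      Vmap L (((q : A) ⊗ₜ[ℂ] (1 : A)) ⊗ₜ[ℂ] ((s : A) ⊗ₜ[ℂ] (1 : A))) +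
      Vmap L (((q : A) ⊗ₜ[ℂ] (1 : A)) ⊗ₜ[ℂ] ((1 : A) ⊗ₜ[ℂ] (s : A))) +
      Vmap L (((q : A) ⊗ₜ[ℂ] (1 : A)) ⊗ₜ[ℂ]
        (TensorProduct.map Bplus.subtype Bplus.subtype ws)) +
      Vmap L (((1 : A) ⊗ₜ[ℂ] (q : A)) ⊗ₜ[ℂ] ((s : A) ⊗ₜ[ℂ] (1 : A))) +
      (Vmap L (((1 : A) ⊗ₜ[ℂ] (q : A)) ⊗ₜ[ℂ] ((1 : A) ⊗ₜ[ℂ] (s : A))) -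
        L ((q : A) ⊗ₜ[ℂ] (s : A)) • (1 : A)) +
      Vmap L (((1 : A) ⊗ₜ[ℂ] (q : A)) ⊗ₜ[ℂ]
        (TensorProduct.map Bplus.subtype Bplus.subtype ws)) +
      Vmap L ((TensorProduct.map Bplus.subtype Bplus.subtype wq) ⊗ₜ[ℂ]
        ((s : A) ⊗ₜ[ℂ] (1 : A))) +
      Vmap L ((TensorProduct.map Bplus.subtype Bplus.subtype wq) ⊗ₜ[ℂ]
        ((1 : A) ⊗ₜ[ℂ] (s : A))) +
      Vmap L ((TensorProduct.map Bplus.subtype Bplus.subtype wq) ⊗ₜ[ℂ]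
        (TensorProduct.map Bplus.subtype Bplus.subtype ws)) := by
    simp only [TensorProduct.tmul_add, TensorProduct.add_tmul, map_add]
    abel
  rw [hE]
  refine Submodule.add_mem _ (Submodule.add_mem _ (Submodule.add_mem _ (Submodule.add_mem _
    (Submodule.add_mem _ (Submodule.add_mem _ (Submodule.add_mem _ (Submodule.add_mem _
    ?_ ?_) ?_) ?_) ?_) ?_) ?_) ?_) ?_
  · rw [Vmap_tmul]
    exact Submodule.smul_mem _ _ (mul_mem_bplus B Bplus hBplus q s)
  · rw [Vmap_tmul, mul_one]
    exact Submodule.smul_mem _ _ q.2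
  · have := map_tensor_mem
      ((Vmap L) ∘ₗ TensorProduct.mk ℂ (A ⊗[ℂ] A) (A ⊗[ℂ] A) ((q : A) ⊗ₜ[ℂ] (1 : A)))
      Bplus.subtype Bplus.subtype Bplus (fun u v => ?_) ws
    · simpa using this
    · simp only [LinearMap.comp_apply, TensorProduct.mk_apply, Submodule.coe_subtype,
        Vmap_tmul]
      exact Submodule.smul_mem _ _ (mul_mem_bplus B Bplus hBplus q u)
  · rw [Vmap_tmul, one_mul]
    exact Submodule.smul_mem _ _ s.2
  · rw [Vmap_tmul, one_mul]
    simp only [sub_self, Submodule.zero_mem]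
  · have := map_tensor_mem
      ((Vmap L) ∘ₗ TensorProduct.mk ℂ (A ⊗[ℂ] A) (A ⊗[ℂ] A) ((1 : A) ⊗ₜ[ℂ] (q : A)))
      Bplus.subtype Bplus.subtype Bplus (fun u v => ?_) ws
    · simpa using this
    · simp only [LinearMap.comp_apply, TensorProduct.mk_apply, Submodule.coe_subtype,
        Vmap_tmul, one_mul]
      exact Submodule.smul_mem _ _ u.2
  · have := map_tensor_mem
      ((Vmap L) ∘ₗ (TensorProduct.mk ℂ (A ⊗[ℂ] A) (A ⊗[ℂ] A)).flip
        ((s : A) ⊗ₜ[ℂ] (1 : A)))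
      Bplus.subtype Bplus.subtype Bplus (fun u v => ?_) wq
    · simpa using this
    · simp only [LinearMap.comp_apply, LinearMap.flip_apply, TensorProduct.mk_apply,
        Submodule.coe_subtype, Vmap_tmul]
      exact Submodule.smul_mem _ _ (mul_mem_bplus B Bplus hBplus u s)
  · have := map_tensor_mem
      ((Vmap L) ∘ₗ (TensorProduct.mk ℂ (A ⊗[ℂ] A) (A ⊗[ℂ] A)).flip
        ((1 : A) ⊗ₜ[ℂ] (s : A)))
      Bplus.subtype Bplus.subtype Bplus (fun u v => ?_) wq
    · simpa using this
    · simp only [LinearMap.comp_apply, LinearMap.flip_apply, TensorProduct.mk_apply,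
        Submodule.coe_subtype, Vmap_tmul, mul_one]
      exact Submodule.smul_mem _ _ u.2
  · refine map_tensor_mem₄ (Vmap L) Bplus.subtype Bplus.subtype Bplus.subtype Bplus.subtype
      Bplus (fun p' q' r' s' => ?_) wq ws
    simp only [Submodule.coe_subtype, Vmap_tmul]
    exact Submodule.smul_mem _ _ (mul_mem_bplus B Bplus hBplus p' r')

theorem V_ab
    (hL : ∀ x : A, L (x ⊗ₜ[ℂ] 1) = Coalgebra.counit (R := ℂ) x ∧
      L ((1 : A) ⊗ₜ[ℂ] x) = Coalgebra.counit (R := ℂ) x)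
    (hBplus : Bplus = Subalgebra.toSubmodule B ⊓
      LinearMap.ker (Coalgebra.counit (R := ℂ) (A := A)))
    {a b : A}
    (ha : Coalgebra.comul (R := ℂ) a - a ⊗ₜ[ℂ] (1 : A) - (1 : A) ⊗ₜ[ℂ] a ∈
      LinearMap.range (TensorProduct.map Bplus.subtype Bplus.subtype))
    (hb : Coalgebra.comul (R := ℂ) b - b ⊗ₜ[ℂ] (1 : A) - (1 : A) ⊗ₜ[ℂ] b ∈
      LinearMap.range (TensorProduct.map Bplus.subtype Bplus.subtype)) :
    Vmap L (Coalgebra.comul (R := ℂ) a ⊗ₜ[ℂ] Coalgebra.comul (R := ℂ) b) -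
      a * b - L (a ⊗ₜ[ℂ] b) • (1 : A) ∈ Bplus := by
  have εa := counit_eq_zero B Bplus hBplus ha
  have εb := counit_eq_zero B Bplus hBplus hb
  obtain ⟨wa, hwa⟩ := ha
  obtain ⟨wb, hwb⟩ := hb
  have ca : Coalgebra.comul (R := ℂ) a = a ⊗ₜ[ℂ] (1 : A) + (1 : A) ⊗ₜ[ℂ] a +
      TensorProduct.map Bplus.subtype Bplus.subtype wa := by rw [hwa]; abel
  have cb : Coalgebra.comul (R := ℂ) b = b ⊗ₜ[ℂ] (1 : A) + (1 : A) ⊗ₜ[ℂ] b +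
      TensorProduct.map Bplus.subtype Bplus.subtype wb := by rw [hwb]; abel
  rw [ca, cb]
  have hL11 : L ((1 : A) ⊗ₜ[ℂ] (1 : A)) = 1 := by
    rw [(hL 1).1, Bialgebra.counit_one]
  have hE : Vmap L
      ((a ⊗ₜ[ℂ] (1 : A) + (1 : A) ⊗ₜ[ℂ] a +
        TensorProduct.map Bplus.subtype Bplus.subtype wa) ⊗ₜ[ℂ]
       (b ⊗ₜ[ℂ] (1 : A) + (1 : A) ⊗ₜ[ℂ] b +
        TensorProduct.map Bplus.subtype Bplus.subtype wb)) -
      a * b - L (a ⊗ₜ[ℂ] b) • (1 : A) =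
      (Vmap L ((a ⊗ₜ[ℂ] (1 : A)) ⊗ₜ[ℂ] (b ⊗ₜ[ℂ] (1 : A))) - a * b) +
      Vmap L ((a ⊗ₜ[ℂ] (1 : A)) ⊗ₜ[ℂ] ((1 : A) ⊗ₜ[ℂ] b)) +
      Vmap L ((a ⊗ₜ[ℂ] (1 : A)) ⊗ₜ[ℂ]
        (TensorProduct.map Bplus.subtype Bplus.subtype wb)) +
      Vmap L (((1 : A) ⊗ₜ[ℂ] a) ⊗ₜ[ℂ] (b ⊗ₜ[ℂ] (1 : A))) +
      (Vmap L (((1 : A) ⊗ₜ[ℂ] a) ⊗ₜ[ℂ] ((1 : A) ⊗ₜ[ℂ] b)) -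
        L (a ⊗ₜ[ℂ] b) • (1 : A)) +
      Vmap L (((1 : A) ⊗ₜ[ℂ] a) ⊗ₜ[ℂ]
        (TensorProduct.map Bplus.subtype Bplus.subtype wb)) +
      Vmap L ((TensorProduct.map Bplus.subtype Bplus.subtype wa) ⊗ₜ[ℂ]
        (b ⊗ₜ[ℂ] (1 : A))) +
      Vmap L ((TensorProduct.map Bplus.subtype Bplus.subtype wa) ⊗ₜ[ℂ]
        ((1 : A) ⊗ₜ[ℂ] b)) +
      Vmap L ((TensorProduct.map Bplus.subtype Bplus.subtype wa) ⊗ₜ[ℂ]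
        (TensorProduct.map Bplus.subtype Bplus.subtype wb)) := by
    simp only [TensorProduct.tmul_add, TensorProduct.add_tmul, map_add]
    abel
  rw [hE]
  refine Submodule.add_mem _ (Submodule.add_mem _ (Submodule.add_mem _ (Submodule.add_mem _
    (Submodule.add_mem _ (Submodule.add_mem _ (Submodule.add_mem _ (Submodule.add_mem _
    ?_ ?_) ?_) ?_) ?_) ?_) ?_) ?_) ?_
  · rw [Vmap_tmul, hL11, one_smul, sub_self]
    exact Submodule.zero_mem _
  · rw [Vmap_tmul, (hL b).2, εb, zero_smul]
    exact Submodule.zero_mem _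
  · have := map_tensor_eq_zero
      ((Vmap L) ∘ₗ TensorProduct.mk ℂ (A ⊗[ℂ] A) (A ⊗[ℂ] A) (a ⊗ₜ[ℂ] (1 : A)))
      Bplus.subtype Bplus.subtype (fun u v => ?_) wb
    · simp only [LinearMap.comp_apply, TensorProduct.mk_apply] at this
      rw [this]
      exact Submodule.zero_mem _
    · simp only [LinearMap.comp_apply, TensorProduct.mk_apply, Submodule.coe_subtype,
        Vmap_tmul, (hL (v : A)).2, counit_bplus B Bplus hBplus v, zero_smul]
  · rw [Vmap_tmul, (hL a).1, εa, zero_smul]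
    exact Submodule.zero_mem _
  · rw [Vmap_tmul, one_mul, sub_self]
    exact Submodule.zero_mem _
  · have := map_tensor_mem
      ((Vmap L) ∘ₗ TensorProduct.mk ℂ (A ⊗[ℂ] A) (A ⊗[ℂ] A) ((1 : A) ⊗ₜ[ℂ] a))
      Bplus.subtype Bplus.subtype Bplus (fun u v => ?_) wb
    · simpa using this
    · simp only [LinearMap.comp_apply, TensorProduct.mk_apply, Submodule.coe_subtype,
        Vmap_tmul, one_mul]
      exact Submodule.smul_mem _ _ u.2
  · have := map_tensor_eq_zero
      ((Vmap L) ∘ₗ (TensorProduct.mk ℂ (A ⊗[ℂ] A) (A ⊗[ℂ] A)).flip (b ⊗ₜ[ℂ] (1 : A)))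
      Bplus.subtype Bplus.subtype (fun u v => ?_) wa
    · simp only [LinearMap.comp_apply, LinearMap.flip_apply, TensorProduct.mk_apply] at this
      rw [this]
      exact Submodule.zero_mem _
    · simp only [LinearMap.comp_apply, LinearMap.flip_apply, TensorProduct.mk_apply,
        Submodule.coe_subtype, Vmap_tmul, (hL (v : A)).1, counit_bplus B Bplus hBplus v,
        zero_smul]
  · have := map_tensor_mem
      ((Vmap L) ∘ₗ (TensorProduct.mk ℂ (A ⊗[ℂ] A) (A ⊗[ℂ] A)).flip ((1 : A) ⊗ₜ[ℂ] b))
      Bplus.subtype Bplus.subtype Bplus (fun u v => ?_) wa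
    · simpa using this
    · simp only [LinearMap.comp_apply, LinearMap.flip_apply, TensorProduct.mk_apply,
        Submodule.coe_subtype, Vmap_tmul, mul_one]
      exact Submodule.smul_mem _ _ u.2
  · refine map_tensor_mem₄ (Vmap L) Bplus.subtype Bplus.subtype Bplus.subtype Bplus.subtype
      Bplus (fun p' q' r' s' => ?_) wa wb
    simp only [Submodule.coe_subtype, Vmap_tmul]
    exact Submodule.smul_mem _ _ (mul_mem_bplus B Bplus hBplus p' r')

theorem key (K L : A ⊗[ℂ] A →ₗ[ℂ] ℂ)
    (hK : ∀ x : A, K (x ⊗ₜ[ℂ] 1) = Coalgebra.counit (R := ℂ) x ∧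
      K ((1 : A) ⊗ₜ[ℂ] x) = Coalgebra.counit (R := ℂ) x)
    (hL : ∀ x : A, L (x ⊗ₜ[ℂ] 1) = Coalgebra.counit (R := ℂ) x ∧
      L ((1 : A) ⊗ₜ[ℂ] x) = Coalgebra.counit (R := ℂ) x)
    (hB : ∀ b ∈ B, Coalgebra.comul (R := ℂ) b ∈
      LinearMap.range (TensorProduct.map (Subalgebra.toSubmodule B).subtype
        (Subalgebra.toSubmodule B).subtype))
    (hBplus : Bplus = Subalgebra.toSubmodule B ⊓
      LinearMap.ker (Coalgebra.counit (R := ℂ) (A := A)))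
    {a b : A}
    (ha : Coalgebra.comul (R := ℂ) a - a ⊗ₜ[ℂ] (1 : A) - (1 : A) ⊗ₜ[ℂ] a ∈
      LinearMap.range (TensorProduct.map Bplus.subtype Bplus.subtype))
    (hb : Coalgebra.comul (R := ℂ) b - b ⊗ₜ[ℂ] (1 : A) - (1 : A) ⊗ₜ[ℂ] b ∈
      LinearMap.range (TensorProduct.map Bplus.subtype Bplus.subtype)) :
    twistMul K L (a ⊗ₜ[ℂ] b) - a * b - (conv K L (a ⊗ₜ[ℂ] b)) • (1 : A) ∈ Bplus := by
  have εa := counit_eq_zero B Bplus hBplus ha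
  have εb := counit_eq_zero B Bplus hBplus hb
  have hVab := V_ab B Bplus hL hBplus ha hb
  obtain ⟨wa, hwa⟩ := ha
  obtain ⟨wb, hwb⟩ := hb
  have ca : Coalgebra.comul (R := ℂ) a = a ⊗ₜ[ℂ] (1 : A) + (1 : A) ⊗ₜ[ℂ] a +
      TensorProduct.map Bplus.subtype Bplus.subtype wa := by rw [hwa]; abel
  have cb : Coalgebra.comul (R := ℂ) b = b ⊗ₜ[ℂ] (1 : A) + (1 : A) ⊗ₜ[ℂ] b +
      TensorProduct.map Bplus.subtype Bplus.subtype wb := by rw [hwb]; abel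
  set g : (A ⊗[ℂ] A) ⊗[ℂ] (A ⊗[ℂ] A) →ₗ[ℂ] A :=
    Tmap K L - (LinearMap.toSpanSingleton ℂ A 1) ∘ₗ Cmap K L with hg
  have hgapp : ∀ z, g z = Tmap K L z - (Cmap K L z) • (1 : A) := by
    intro z
    simp [hg, LinearMap.sub_apply, LinearMap.comp_apply, LinearMap.toSpanSingleton_apply]
  have hK11 : K ((1 : A) ⊗ₜ[ℂ] (1 : A)) = 1 := by
    rw [(hK 1).1, Bialgebra.counit_one]
  have hL11 : L ((1 : A) ⊗ₜ[ℂ] (1 : A)) = 1 := by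
    rw [(hL 1).1, Bialgebra.counit_one]
  set Wa := TensorProduct.map Bplus.subtype Bplus.subtype wa with hWa
  set Wb := TensorProduct.map Bplus.subtype Bplus.subtype wb with hWb
  have hX : twistMul K L (a ⊗ₜ[ℂ] b) - a * b - (conv K L (a ⊗ₜ[ℂ] b)) • (1 : A) =
      g ((a ⊗ₜ[ℂ] (1 : A)) ⊗ₜ[ℂ] (b ⊗ₜ[ℂ] (1 : A))) +
      g ((a ⊗ₜ[ℂ] (1 : A)) ⊗ₜ[ℂ] ((1 : A) ⊗ₜ[ℂ] b)) +
      g ((a ⊗ₜ[ℂ] (1 : A)) ⊗ₜ[ℂ] Wb) +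
      g (((1 : A) ⊗ₜ[ℂ] a) ⊗ₜ[ℂ] (b ⊗ₜ[ℂ] (1 : A))) +
      (g (((1 : A) ⊗ₜ[ℂ] a) ⊗ₜ[ℂ] ((1 : A) ⊗ₜ[ℂ] b)) - a * b) +
      g (((1 : A) ⊗ₜ[ℂ] a) ⊗ₜ[ℂ] Wb) +
      g (Wa ⊗ₜ[ℂ] (b ⊗ₜ[ℂ] (1 : A))) +
      g (Wa ⊗ₜ[ℂ] ((1 : A) ⊗ₜ[ℂ] b)) +
      g (Wa ⊗ₜ[ℂ] Wb) := by
    rw [twistMul_eq, conv_eq, ca, cb]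
    simp only [hgapp, TensorProduct.tmul_add, TensorProduct.add_tmul, map_add, add_smul]
    abel
  rw [hX]
  refine Submodule.add_mem _ (Submodule.add_mem _ (Submodule.add_mem _ (Submodule.add_mem _
    (Submodule.add_mem _ (Submodule.add_mem _ (Submodule.add_mem _ (Submodule.add_mem _
    ?_ ?_) ?_) ?_) ?_) ?_) ?_) ?_) ?_
  · -- (a⊗1)⊗(b⊗1)
    rw [hgapp, Tmap_tmul, Cmap_tmul, Bialgebra.comul_one, Algebra.TensorProduct.one_def,
      Vmap_tmul, hL11, mul_one, mul_one, one_smul, sub_self]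
    exact Submodule.zero_mem _
  · -- (a⊗1)⊗(1⊗b)
    rw [hgapp, Tmap_tmul, Cmap_tmul, (hK a).1, εa, zero_smul, zero_mul, zero_smul, sub_self]
    exact Submodule.zero_mem _
  · -- (a⊗1)⊗Wb
    rw [hWb]
    have := map_tensor_mem
      (g ∘ₗ TensorProduct.mk ℂ (A ⊗[ℂ] A) (A ⊗[ℂ] A) (a ⊗ₜ[ℂ] (1 : A)))
      Bplus.subtype Bplus.subtype Bplus (fun r' s' => ?_) wb
    · simpa using this
    · simp only [LinearMap.comp_apply, TensorProduct.mk_apply, Submodule.coe_subtype]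
      rw [hgapp, Tmap_tmul, Cmap_tmul, (hL (s' : A)).2, counit_bplus B Bplus hBplus s',
        mul_zero, zero_smul, sub_zero]
      exact Submodule.smul_mem _ _ (V_one_left B Bplus hL hB hBplus s')
  · -- (1⊗a)⊗(b⊗1)
    rw [hgapp, Tmap_tmul, Cmap_tmul, (hK b).2, εb, zero_smul, zero_mul, zero_smul, sub_self]
    exact Submodule.zero_mem _
  · -- (1⊗a)⊗(1⊗b)  main term
    rw [hgapp, Tmap_tmul, Cmap_tmul, hK11, one_smul, one_mul]
    have : Vmap L (Coalgebra.comul (R := ℂ) a ⊗ₜ[ℂ] Coalgebra.comul (R := ℂ) b) -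
        L (a ⊗ₜ[ℂ] b) • (1 : A) - a * b =
        Vmap L (Coalgebra.comul (R := ℂ) a ⊗ₜ[ℂ] Coalgebra.comul (R := ℂ) b) -
        a * b - L (a ⊗ₜ[ℂ] b) • (1 : A) := by abel
    rw [this]
    exact hVab
  · -- (1⊗a)⊗Wb
    rw [hWb]
    have := map_tensor_mem
      (g ∘ₗ TensorProduct.mk ℂ (A ⊗[ℂ] A) (A ⊗[ℂ] A) ((1 : A) ⊗ₜ[ℂ] a))
      Bplus.subtype Bplus.subtype Bplus (fun r' s' => ?_) wb
    · simpa using this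
    · simp only [LinearMap.comp_apply, TensorProduct.mk_apply, Submodule.coe_subtype]
      rw [hgapp, Tmap_tmul, Cmap_tmul, (hK (r' : A)).2, counit_bplus B Bplus hBplus r',
        zero_smul, zero_mul, zero_smul, sub_self]
      exact Submodule.zero_mem _
  · -- Wa⊗(b⊗1)
    rw [hWa]
    have := map_tensor_mem
      (g ∘ₗ (TensorProduct.mk ℂ (A ⊗[ℂ] A) (A ⊗[ℂ] A)).flip (b ⊗ₜ[ℂ] (1 : A)))
      Bplus.subtype Bplus.subtype Bplus (fun p' q' => ?_) wa
    · simpa using this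
    · simp only [LinearMap.comp_apply, LinearMap.flip_apply, TensorProduct.mk_apply,
        Submodule.coe_subtype]
      rw [hgapp, Tmap_tmul, Cmap_tmul, (hL (q' : A)).1, counit_bplus B Bplus hBplus q',
        mul_zero, zero_smul, sub_zero]
      exact Submodule.smul_mem _ _ (V_one_right B Bplus hL hB hBplus q')
  · -- Wa⊗(1⊗b)
    rw [hWa]
    have := map_tensor_mem
      (g ∘ₗ (TensorProduct.mk ℂ (A ⊗[ℂ] A) (A ⊗[ℂ] A)).flip ((1 : A) ⊗ₜ[ℂ] b))
      Bplus.subtype Bplus.subtype Bplus (fun p' q' => ?_) wa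
    · simpa using this
    · simp only [LinearMap.comp_apply, LinearMap.flip_apply, TensorProduct.mk_apply,
        Submodule.coe_subtype]
      rw [hgapp, Tmap_tmul, Cmap_tmul, (hK (p' : A)).1, counit_bplus B Bplus hBplus p',
        zero_smul, zero_mul, zero_smul, sub_self]
      exact Submodule.zero_mem _
  · -- Wa⊗Wb
    rw [hWa, hWb]
    refine map_tensor_mem₄ g Bplus.subtype Bplus.subtype Bplus.subtype Bplus.subtype
      Bplus (fun p' q' r' s' => ?_) wa wb
    simp only [Submodule.coe_subtype]
    rw [hgapp, Tmap_tmul, Cmap_tmul]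
    have hrw : K ((p' : A) ⊗ₜ[ℂ] (r' : A)) • Vmap L
        (Coalgebra.comul (R := ℂ) (q' : A) ⊗ₜ[ℂ] Coalgebra.comul (R := ℂ) (s' : A)) -
        (K ((p' : A) ⊗ₜ[ℂ] (r' : A)) * L ((q' : A) ⊗ₜ[ℂ] (s' : A))) • (1 : A) =
        K ((p' : A) ⊗ₜ[ℂ] (r' : A)) • (Vmap L
          (Coalgebra.comul (R := ℂ) (q' : A) ⊗ₜ[ℂ] Coalgebra.comul (R := ℂ) (s' : A)) -
          L ((q' : A) ⊗ₜ[ℂ] (s' : A)) • (1 : A)) := by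
      rw [smul_sub, smul_smul]
    rw [hrw]
    exact Submodule.smul_mem _ _ (V_qs B Bplus hB hBplus q' s')

end WithB

theorem inv_unital (J Jinv : A ⊗[ℂ] A →ₗ[ℂ] ℂ)
    (hJu : ∀ x : A, J (x ⊗ₜ[ℂ] 1) = Coalgebra.counit (R := ℂ) x ∧
      J ((1 : A) ⊗ₜ[ℂ] x) = Coalgebra.counit (R := ℂ) x)
    (hconv : conv Jinv J = Coalgebra.counit (R := ℂ) (A := A ⊗[ℂ] A)) :
    ∀ x : A, Jinv (x ⊗ₜ[ℂ] 1) = Coalgebra.counit (R := ℂ) x ∧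
      Jinv ((1 : A) ⊗ₜ[ℂ] x) = Coalgebra.counit (R := ℂ) x := by
  have collapse : ∀ x : A,
      ((TensorProduct.rid ℂ A).toLinearMap ∘ₗ
        LinearMap.lTensor A (Coalgebra.counit (R := ℂ) (A := A)))
        (Coalgebra.comul (R := ℂ) x) = x := by
    intro x
    simp [LinearMap.comp_apply, Coalgebra.lTensor_counit_comul, rid_tmul]
  intro x
  constructor
  · have hF : (Cmap Jinv J) ∘ₗ (TensorProduct.mk ℂ (A ⊗[ℂ] A) (A ⊗[ℂ] A)).flip
        ((1 : A) ⊗ₜ[ℂ] (1 : A)) =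
        Jinv ∘ₗ (TensorProduct.mk ℂ A A).flip (1 : A) ∘ₗ
          (TensorProduct.rid ℂ A).toLinearMap ∘ₗ
          LinearMap.lTensor A (Coalgebra.counit (R := ℂ) (A := A)) := by
      apply TensorProduct.ext'
      intro u v
      simp only [LinearMap.comp_apply, LinearMap.flip_apply, TensorProduct.mk_apply,
        Cmap_tmul, LinearMap.lTensor_tmul, LinearEquiv.coe_coe, rid_tmul,
        (hJu v).1, ← TensorProduct.smul_tmul', map_smul, smul_eq_mul]
      ring
    have h1 := LinearMap.congr_fun hF (Coalgebra.comul (R := ℂ) x)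
    simp only [LinearMap.comp_apply, LinearMap.flip_apply, TensorProduct.mk_apply] at h1
    have h2 : Cmap Jinv J (Coalgebra.comul (R := ℂ) x ⊗ₜ[ℂ] ((1 : A) ⊗ₜ[ℂ] (1 : A))) =
        conv Jinv J (x ⊗ₜ[ℂ] (1 : A)) := by
      rw [conv_eq, Bialgebra.comul_one, Algebra.TensorProduct.one_def]
    have h3 : ((TensorProduct.rid ℂ A).toLinearMap
        ((LinearMap.lTensor A (Coalgebra.counit (R := ℂ) (A := A)))
          (Coalgebra.comul (R := ℂ) x))) = x := collapse x
    rw [h3] at h1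
    rw [← h1, h2, hconv, counit_tmulC, Bialgebra.counit_one, mul_one]
  · have hF : (Cmap Jinv J) ∘ₗ TensorProduct.mk ℂ (A ⊗[ℂ] A) (A ⊗[ℂ] A)
        ((1 : A) ⊗ₜ[ℂ] (1 : A)) =
        Jinv ∘ₗ TensorProduct.mk ℂ A A (1 : A) ∘ₗ
          (TensorProduct.rid ℂ A).toLinearMap ∘ₗ
          LinearMap.lTensor A (Coalgebra.counit (R := ℂ) (A := A)) := by
      apply TensorProduct.ext'
      intro u v
      simp only [LinearMap.comp_apply, TensorProduct.mk_apply,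
        Cmap_tmul, LinearMap.lTensor_tmul, LinearEquiv.coe_coe, rid_tmul,
        (hJu v).2, TensorProduct.tmul_smul, map_smul, smul_eq_mul]
      ring
    have h1 := LinearMap.congr_fun hF (Coalgebra.comul (R := ℂ) x)
    simp only [LinearMap.comp_apply, TensorProduct.mk_apply] at h1
    have h2 : Cmap Jinv J (((1 : A) ⊗ₜ[ℂ] (1 : A)) ⊗ₜ[ℂ] Coalgebra.comul (R := ℂ) x) =
        conv Jinv J ((1 : A) ⊗ₜ[ℂ] x) := by
      rw [conv_eq, Bialgebra.comul_one, Algebra.TensorProduct.one_def]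
    have h3 : ((TensorProduct.rid ℂ A).toLinearMap
        ((LinearMap.lTensor A (Coalgebra.counit (R := ℂ) (A := A)))
          (Coalgebra.comul (R := ℂ) x))) = x := collapse x
    rw [h3] at h1
    rw [← h1, h2, hconv, counit_tmulC, Bialgebra.counit_one, one_mul]

end TwistAux

/-- Let `A` be a commutative Hopf algebra over `ℂ`, `J` a Hopf 2-cocycle with convolution
inverse `Jinv`, and `B ⊆ A` a Hopf subalgebra with augmentation ideal `B⁺ = B ∩ ker ε`.
If `a, b ∈ A` satisfy `Δ(a) − a⊗1 − 1⊗a ∈ B⁺ ⊗ B⁺` and `Δ(b) − b⊗1 − 1⊗b ∈ B⁺ ⊗ B⁺`,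
then the commutator `[a,b] = _J m_J(a⊗b) − _J m_J(b⊗a)` lies in `B⁺`. -/
theorem twistMul_commutator_mem_augmentation {A : Type} [CommRing A] [HopfAlgebra ℂ A]
    (J Jinv : A ⊗[ℂ] A →ₗ[ℂ] ℂ) (hJ : IsHopf2Cocycle J Jinv)
    (B : Subalgebra ℂ A)
    (hB : ∀ b ∈ B, Coalgebra.comul (R := ℂ) b ∈
      LinearMap.range (TensorProduct.map (Subalgebra.toSubmodule B).subtype
        (Subalgebra.toSubmodule B).subtype))
    (Bplus : Submodule ℂ A)
    (hBplus : Bplus = Subalgebra.toSubmodule B ⊓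
      LinearMap.ker (Coalgebra.counit (R := ℂ) (A := A)))
    (a b : A)
    (ha : Coalgebra.comul (R := ℂ) a - a ⊗ₜ[ℂ] (1 : A) - (1 : A) ⊗ₜ[ℂ] a ∈
      LinearMap.range (TensorProduct.map Bplus.subtype Bplus.subtype))
    (hb : Coalgebra.comul (R := ℂ) b - b ⊗ₜ[ℂ] (1 : A) - (1 : A) ⊗ₜ[ℂ] b ∈
      LinearMap.range (TensorProduct.map Bplus.subtype Bplus.subtype)) :
    twistMul Jinv J (a ⊗ₜ[ℂ] b) - twistMul Jinv J (b ⊗ₜ[ℂ] a) ∈ Bplus := by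
  classical
  have hJu := hJ.2.2.2
  have hconv := hJ.2.1
  have hKinv := TwistAux.inv_unital J Jinv hJu hconv
  have εa := TwistAux.counit_eq_zero B Bplus hBplus ha
  have εb := TwistAux.counit_eq_zero B Bplus hBplus hb
  have k1 := TwistAux.key B Bplus Jinv J hKinv hJu hB hBplus ha hb
  have k2 := TwistAux.key B Bplus Jinv J hKinv hJu hB hBplus hb ha
  have hc1 : conv Jinv J (a ⊗ₜ[ℂ] b) = 0 := by
    rw [hconv, TwistAux.counit_tmulC, εa, zero_mul]
  have hc2 : conv Jinv J (b ⊗ₜ[ℂ] a) = 0 := by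
    rw [hconv, TwistAux.counit_tmulC, εb, zero_mul]
  rw [hc1, zero_smul, sub_zero] at k1
  rw [hc2, zero_smul, sub_zero] at k2
  have hsplit : twistMul Jinv J (a ⊗ₜ[ℂ] b) - twistMul Jinv J (b ⊗ₜ[ℂ] a) =
      (twistMul Jinv J (a ⊗ₜ[ℂ] b) - a * b) - (twistMul Jinv J (b ⊗ₜ[ℂ] a) - b * a) := by
    rw [mul_comm b a]; abel
  rw [hsplit]
  exact Submodule.sub_mem _ k1 k2

end
end

section
/- Let π : A → B be a surjective homomorphism of Hopf algebras over ℂ with A commutative, let K be a Hopf 2-cocycle for B, and let J := K ∘ (π ⊗ π) be its pullback to A. If c ∈ A satisfies (π ⊗ id)(Δ(c)) = 1 ⊗ c and (id ⊗ π)(Δ(c)) = c ⊗ 1, then c is central in the twisted Hopf algebra _J A_J; in fact _J m_J(c⊗a) = ca = _J m_J(a⊗c) for every a ∈ A. -/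
open TensorProduct LinearMap

noncomputable section

namespace PCCAux

open Coalgebra

section Coalg

variable {C D : Type} [AddCommGroup C] [Module ℂ C] [Coalgebra ℂ C]
  [AddCommGroup D] [Module ℂ D] [Coalgebra ℂ D]

lemma sum_counit_smul_right {a : C} (r : Coalgebra.Repr ℂ a (C × C)) :
    ∑ i ∈ r.index, counit (R := ℂ) (r.left i) • r.right i = a := by
  have h := congrArg (TensorProduct.lid ℂ C) (Coalgebra.sum_counit_tmul_eq r)
  simp only [map_sum, TensorProduct.lid_tmul] at h
  simpa using h

lemma sum_smul_counit_left {a : C} (r : Coalgebra.Repr ℂ a (C × C)) :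
    ∑ i ∈ r.index, counit (R := ℂ) (r.right i) • r.left i = a := by
  have h := congrArg (TensorProduct.rid ℂ C) (Coalgebra.sum_tmul_counit_eq r)
  simp only [map_sum, TensorProduct.rid_tmul] at h
  simpa using h

lemma comul_tmul_repr (x : C) (y : D) (rx : Coalgebra.Repr ℂ x (C × C)) (ry : Coalgebra.Repr ℂ y (D × D)) :
    Coalgebra.comul (R := ℂ) (x ⊗ₜ[ℂ] y) = ∑ i ∈ rx.index, ∑ j ∈ ry.index,
      (rx.left i ⊗ₜ[ℂ] ry.left j) ⊗ₜ[ℂ] (rx.right i ⊗ₜ[ℂ] ry.right j) := by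
  show TensorProduct.tensorTensorTensorComm ℂ C C D D
      (Coalgebra.comul (R := ℂ) x ⊗ₜ Coalgebra.comul (R := ℂ) y) = _
  rw [← rx.eq, ← ry.eq, TensorProduct.sum_tmul, map_sum]
  refine Finset.sum_congr rfl fun i _ => ?_
  rw [TensorProduct.tmul_sum, map_sum]
  simp [TensorProduct.tensorTensorTensorComm_tmul]

end Coalg

section KinvUnits

variable {B : Type} [Ring B] [Bialgebra ℂ B]

lemma comul_one_tmul (b : B) (r : Coalgebra.Repr ℂ b (B × B)) :
    Coalgebra.comul (R := ℂ) ((1 : B) ⊗ₜ[ℂ] b) = ∑ k ∈ r.index,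
      ((1 : B) ⊗ₜ[ℂ] r.left k) ⊗ₜ[ℂ] ((1 : B) ⊗ₜ[ℂ] r.right k) := by
  have h1 : Coalgebra.comul (R := ℂ) (1 : B) = (1 : B) ⊗ₜ[ℂ] (1 : B) := by
    rw [Bialgebra.comul_one, Algebra.TensorProduct.one_def]
  show TensorProduct.tensorTensorTensorComm ℂ B B B B
      (Coalgebra.comul (R := ℂ) (1 : B) ⊗ₜ Coalgebra.comul (R := ℂ) b) = _
  rw [h1, ← r.eq, TensorProduct.tmul_sum, map_sum]
  simp [TensorProduct.tensorTensorTensorComm_tmul]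

lemma comul_tmul_one (b : B) (r : Coalgebra.Repr ℂ b (B × B)) :
    Coalgebra.comul (R := ℂ) (b ⊗ₜ[ℂ] (1 : B)) = ∑ k ∈ r.index,
      (r.left k ⊗ₜ[ℂ] (1 : B)) ⊗ₜ[ℂ] (r.right k ⊗ₜ[ℂ] (1 : B)) := by
  have h1 : Coalgebra.comul (R := ℂ) (1 : B) = (1 : B) ⊗ₜ[ℂ] (1 : B) := by
    rw [Bialgebra.comul_one, Algebra.TensorProduct.one_def]
  show TensorProduct.tensorTensorTensorComm ℂ B B B B
      (Coalgebra.comul (R := ℂ) b ⊗ₜ Coalgebra.comul (R := ℂ) (1 : B)) = _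
  rw [h1, ← r.eq, TensorProduct.sum_tmul, map_sum]
  simp [TensorProduct.tensorTensorTensorComm_tmul]

lemma Kinv_units (K Kinv : B ⊗[ℂ] B →ₗ[ℂ] ℂ)
    (h1 : conv K Kinv = Coalgebra.counit)
    (hu : ∀ b : B, K (b ⊗ₜ[ℂ] 1) = Coalgebra.counit (R := ℂ) b ∧
      K ((1 : B) ⊗ₜ[ℂ] b) = Coalgebra.counit (R := ℂ) b) :
    ∀ b : B, Kinv ((1 : B) ⊗ₜ[ℂ] b) = Coalgebra.counit (R := ℂ) b ∧
      Kinv (b ⊗ₜ[ℂ] (1 : B)) = Coalgebra.counit (R := ℂ) b := by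
  intro b
  have rb := Coalgebra.Repr.arbitrary ℂ b
  constructor
  · have h := LinearMap.congr_fun h1 ((1 : B) ⊗ₜ[ℂ] b)
    rw [conv] at h
    simp only [LinearMap.coe_comp, Function.comp_apply] at h
    rw [comul_one_tmul b rb, map_sum, map_sum] at h
    simp only [TensorProduct.map_tmul, LinearMap.mul'_apply] at h
    have hL : ∀ k ∈ rb.index, K ((1:B) ⊗ₜ[ℂ] rb.left k) * Kinv ((1:B) ⊗ₜ[ℂ] rb.right k)
        = Kinv ((counit (R := ℂ) (rb.left k) • (1:B)) ⊗ₜ[ℂ] rb.right k) := by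
      intro k _
      rw [(hu _).2]
      simp [TensorProduct.smul_tmul, smul_eq_mul]
    rw [Finset.sum_congr rfl hL] at h
    have heq : ∑ k ∈ rb.index, Kinv ((counit (R := ℂ) (rb.left k) • (1:B)) ⊗ₜ[ℂ] rb.right k)
        = Kinv ((1 : B) ⊗ₜ[ℂ] b) := by
      rw [← map_sum]
      congr 1
      calc ∑ k ∈ rb.index, (counit (R := ℂ) (rb.left k) • (1:B)) ⊗ₜ[ℂ] rb.right k
          = ∑ k ∈ rb.index, (1:B) ⊗ₜ[ℂ] (counit (R := ℂ) (rb.left k) • rb.right k) := by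
            refine Finset.sum_congr rfl fun k _ => ?_
            rw [TensorProduct.smul_tmul]
        _ = (1 : B) ⊗ₜ[ℂ] b := by rw [← TensorProduct.tmul_sum, sum_counit_smul_right]
    rw [heq] at h
    rw [h]
    rw [TensorProduct.counit_tmul]
    simp
  · have h := LinearMap.congr_fun h1 (b ⊗ₜ[ℂ] (1 : B))
    rw [conv] at h
    simp only [LinearMap.coe_comp, Function.comp_apply] at h
    rw [comul_tmul_one b rb, map_sum, map_sum] at h
    simp only [TensorProduct.map_tmul, LinearMap.mul'_apply] at h
    have hL : ∀ k ∈ rb.index, K (rb.left k ⊗ₜ[ℂ] (1:B)) * Kinv (rb.right k ⊗ₜ[ℂ] (1:B))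
        = Kinv ((counit (R := ℂ) (rb.left k) • rb.right k) ⊗ₜ[ℂ] (1:B)) := by
      intro k _
      rw [(hu _).1, ← TensorProduct.smul_tmul', map_smul, smul_eq_mul]
    rw [Finset.sum_congr rfl hL] at h
    have heq : ∑ k ∈ rb.index, Kinv ((counit (R := ℂ) (rb.left k) • rb.right k) ⊗ₜ[ℂ] (1:B))
        = Kinv (b ⊗ₜ[ℂ] (1 : B)) := by
      rw [← map_sum, ← TensorProduct.sum_tmul, sum_counit_smul_right]
    rw [heq] at h
    rw [h]
    rw [TensorProduct.counit_tmul]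
    simp

end KinvUnits

section Main

variable {A B : Type} [CommRing A] [Bialgebra ℂ A] [Ring B] [Bialgebra ℂ B]
  (π : A →ₐc[ℂ] B)

lemma mulRightTwist_repr (J : A ⊗[ℂ] A →ₗ[ℂ] ℂ) (x y : A)
    (rx : Coalgebra.Repr ℂ x (A × A)) (ry : Coalgebra.Repr ℂ y (A × A)) :
    mulRightTwist J (x ⊗ₜ[ℂ] y) = ∑ i ∈ rx.index, ∑ j ∈ ry.index,
      J (rx.right i ⊗ₜ[ℂ] ry.right j) • (rx.left i * ry.left j) := by
  rw [mulRightTwist]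
  simp only [LinearMap.coe_comp, Function.comp_apply, LinearEquiv.coe_coe]
  rw [comul_tmul_repr x y rx ry, map_sum, map_sum]
  simp [TensorProduct.map_tmul, LinearMap.mul'_apply, TensorProduct.rid_tmul]

lemma twistMul_apply' (Ki J : A ⊗[ℂ] A →ₗ[ℂ] ℂ) (z : A ⊗[ℂ] A) :
    twistMul Ki J z = TensorProduct.lid ℂ A
      (TensorProduct.map Ki (mulRightTwist J) (Coalgebra.comul (R := ℂ) z)) := by
  have h : (LinearMap.lTensor ℂ (TensorProduct.rid ℂ A).toLinearMap) ∘ₗ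
      TensorProduct.map Ki (TensorProduct.map (LinearMap.mul' ℂ A) J) ∘ₗ
      LinearMap.lTensor (A ⊗[ℂ] A) (Coalgebra.comul (R := ℂ)) =
      TensorProduct.map Ki (mulRightTwist J) :=
    TensorProduct.ext' fun u v => by
      simp [mulRightTwist]
  have h2 := LinearMap.congr_fun h (Coalgebra.comul (R := ℂ) z)
  simp only [LinearMap.coe_comp, Function.comp_apply] at h2
  rw [twistMul]
  simp only [LinearMap.coe_comp, Function.comp_apply, LinearEquiv.coe_coe]
  rw [h2]

lemma apply_hc2 {M : Type} [AddCommGroup M] [Module ℂ M] (c : A)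
    (hc2 : TensorProduct.map LinearMap.id (π : A →ₗ[ℂ] B) (Coalgebra.comul (R := ℂ) c) =
      c ⊗ₜ[ℂ] (1 : B))
    (rc : Coalgebra.Repr ℂ c (A × A)) (F : A ⊗[ℂ] B →ₗ[ℂ] M) :
    ∑ i ∈ rc.index, F (rc.left i ⊗ₜ[ℂ] π (rc.right i)) = F (c ⊗ₜ[ℂ] (1 : B)) := by
  have h : ∑ i ∈ rc.index, rc.left i ⊗ₜ[ℂ] π (rc.right i) = c ⊗ₜ[ℂ] (1 : B) := by
    rw [← hc2, ← rc.eq, map_sum]; simp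
  rw [← h, map_sum]

lemma apply_hc1 {M : Type} [AddCommGroup M] [Module ℂ M] (c : A)
    (hc1 : TensorProduct.map (π : A →ₗ[ℂ] B) LinearMap.id (Coalgebra.comul (R := ℂ) c) =
      (1 : B) ⊗ₜ[ℂ] c)
    (rc : Coalgebra.Repr ℂ c (A × A)) (F : B ⊗[ℂ] A →ₗ[ℂ] M) :
    ∑ i ∈ rc.index, F (π (rc.left i) ⊗ₜ[ℂ] rc.right i) = F ((1 : B) ⊗ₜ[ℂ] c) := by
  have h : ∑ i ∈ rc.index, π (rc.left i) ⊗ₜ[ℂ] rc.right i = (1 : B) ⊗ₜ[ℂ] c := by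
    rw [← hc1, ← rc.eq, map_sum]; simp
  rw [← h, map_sum]

lemma mulRightTwist_c_left (K : B ⊗[ℂ] B →ₗ[ℂ] ℂ) (J : A ⊗[ℂ] A →ₗ[ℂ] ℂ)
    (hJ : J = K ∘ₗ TensorProduct.map (π : A →ₗ[ℂ] B) (π : A →ₗ[ℂ] B))
    (hKL : ∀ b : B, K ((1 : B) ⊗ₜ[ℂ] b) = Coalgebra.counit (R := ℂ) b) (c : A)
    (hc2 : TensorProduct.map LinearMap.id (π : A →ₗ[ℂ] B) (Coalgebra.comul (R := ℂ) c) =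
      c ⊗ₜ[ℂ] (1 : B)) (a : A) :
    mulRightTwist J (c ⊗ₜ[ℂ] a) = c * a := by
  have rc := Coalgebra.Repr.arbitrary ℂ c
  have ra := Coalgebra.Repr.arbitrary ℂ a
  rw [mulRightTwist_repr J c a rc ra, Finset.sum_comm]
  have step : ∀ j ∈ ra.index,
      ∑ i ∈ rc.index, J (rc.right i ⊗ₜ[ℂ] ra.right j) • (rc.left i * ra.left j)
      = Coalgebra.counit (R := ℂ) (ra.right j) • (c * ra.left j) := by
    intro j _
    have key := apply_hc2 π c hc2 rc
      ((TensorProduct.rid ℂ A).toLinearMap ∘ₗ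
        TensorProduct.map (LinearMap.mulRight ℂ (ra.left j))
          (K ∘ₗ (TensorProduct.mk ℂ B B).flip (π (ra.right j))))
    simp only [LinearMap.coe_comp, Function.comp_apply, LinearEquiv.coe_coe,
      TensorProduct.map_tmul, TensorProduct.mk_apply, LinearMap.flip_apply,
      TensorProduct.rid_tmul, LinearMap.mulRight_apply] at key
    rw [hJ]
    simp only [LinearMap.coe_comp, Function.comp_apply, TensorProduct.map_tmul,
      BialgHom.coe_toLinearMap]
    have hco : ∀ x : A, (π : A →ₗ[ℂ] B) x = π x := fun x => rfl
    rw [key, hKL, CoalgHomClass.counit_comp_apply]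
  rw [Finset.sum_congr rfl step]
  calc ∑ j ∈ ra.index, Coalgebra.counit (R := ℂ) (ra.right j) • (c * ra.left j)
      = c * ∑ j ∈ ra.index, Coalgebra.counit (R := ℂ) (ra.right j) • ra.left j := by
        rw [Finset.mul_sum]
        exact Finset.sum_congr rfl fun j _ => (mul_smul_comm _ _ _).symm
    _ = c * a := by rw [sum_smul_counit_left]

lemma mulRightTwist_c_right (K : B ⊗[ℂ] B →ₗ[ℂ] ℂ) (J : A ⊗[ℂ] A →ₗ[ℂ] ℂ)
    (hJ : J = K ∘ₗ TensorProduct.map (π : A →ₗ[ℂ] B) (π : A →ₗ[ℂ] B))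
    (hKR : ∀ b : B, K (b ⊗ₜ[ℂ] (1 : B)) = Coalgebra.counit (R := ℂ) b) (c : A)
    (hc2 : TensorProduct.map LinearMap.id (π : A →ₗ[ℂ] B) (Coalgebra.comul (R := ℂ) c) =
      c ⊗ₜ[ℂ] (1 : B)) (a : A) :
    mulRightTwist J (a ⊗ₜ[ℂ] c) = a * c := by
  have rc := Coalgebra.Repr.arbitrary ℂ c
  have ra := Coalgebra.Repr.arbitrary ℂ a
  rw [mulRightTwist_repr J a c ra rc]
  have step : ∀ j ∈ ra.index,
      ∑ i ∈ rc.index, J (ra.right j ⊗ₜ[ℂ] rc.right i) • (ra.left j * rc.left i)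
      = Coalgebra.counit (R := ℂ) (ra.right j) • (ra.left j * c) := by
    intro j _
    have key := apply_hc2 π c hc2 rc
      ((TensorProduct.rid ℂ A).toLinearMap ∘ₗ
        TensorProduct.map (LinearMap.mulLeft ℂ (ra.left j))
          (K ∘ₗ TensorProduct.mk ℂ B B (π (ra.right j))))
    simp only [LinearMap.coe_comp, Function.comp_apply, LinearEquiv.coe_coe,
      TensorProduct.map_tmul, TensorProduct.mk_apply,
      TensorProduct.rid_tmul, LinearMap.mulLeft_apply] at key
    rw [hJ]
    simp only [LinearMap.coe_comp, Function.comp_apply, TensorProduct.map_tmul,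
      BialgHom.coe_toLinearMap]
    have hco : ∀ x : A, (π : A →ₗ[ℂ] B) x = π x := fun x => rfl
    rw [key, hKR, CoalgHomClass.counit_comp_apply]
  rw [Finset.sum_congr rfl step]
  calc ∑ j ∈ ra.index, Coalgebra.counit (R := ℂ) (ra.right j) • (ra.left j * c)
      = (∑ j ∈ ra.index, Coalgebra.counit (R := ℂ) (ra.right j) • ra.left j) * c := by
        rw [Finset.sum_mul]
        exact Finset.sum_congr rfl fun j _ => (smul_mul_assoc _ _ _).symm
    _ = a * c := by rw [sum_smul_counit_left]

lemma twist_left (Kinv : B ⊗[ℂ] B →ₗ[ℂ] ℂ) (J Jinv : A ⊗[ℂ] A →ₗ[ℂ] ℂ)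
    (hJinv : Jinv = Kinv ∘ₗ TensorProduct.map (π : A →ₗ[ℂ] B) (π : A →ₗ[ℂ] B))
    (hKiL : ∀ b : B, Kinv ((1 : B) ⊗ₜ[ℂ] b) = Coalgebra.counit (R := ℂ) b) (c : A)
    (hc1 : TensorProduct.map (π : A →ₗ[ℂ] B) LinearMap.id (Coalgebra.comul (R := ℂ) c) =
      (1 : B) ⊗ₜ[ℂ] c) (a : A) :
    twistMul Jinv J (c ⊗ₜ[ℂ] a) = mulRightTwist J (c ⊗ₜ[ℂ] a) := by
  have rc := Coalgebra.Repr.arbitrary ℂ c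
  have ra := Coalgebra.Repr.arbitrary ℂ a
  rw [twistMul_apply', comul_tmul_repr c a rc ra]
  simp only [map_sum, TensorProduct.map_tmul, TensorProduct.lid_tmul]
  rw [Finset.sum_comm]
  have step : ∀ j ∈ ra.index,
      ∑ i ∈ rc.index, Jinv (rc.left i ⊗ₜ[ℂ] ra.left j) • mulRightTwist J (rc.right i ⊗ₜ[ℂ] ra.right j)
      = Coalgebra.counit (R := ℂ) (ra.left j) • mulRightTwist J (c ⊗ₜ[ℂ] ra.right j) := by
    intro j _
    have key := apply_hc1 π c hc1 rc
      ((TensorProduct.lid ℂ A).toLinearMap ∘ₗ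
        TensorProduct.map (Kinv ∘ₗ (TensorProduct.mk ℂ B B).flip (π (ra.left j)))
          (mulRightTwist J ∘ₗ (TensorProduct.mk ℂ A A).flip (ra.right j)))
    simp only [LinearMap.coe_comp, Function.comp_apply, LinearEquiv.coe_coe,
      TensorProduct.map_tmul, TensorProduct.mk_apply, LinearMap.flip_apply,
      TensorProduct.lid_tmul] at key
    rw [hJinv]
    simp only [LinearMap.coe_comp, Function.comp_apply, TensorProduct.map_tmul,
      BialgHom.coe_toLinearMap]
    have hco : ∀ x : A, (π : A →ₗ[ℂ] B) x = π x := fun x => rfl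
    rw [key, hKiL, CoalgHomClass.counit_comp_apply]
  rw [Finset.sum_congr rfl step]
  calc ∑ j ∈ ra.index, Coalgebra.counit (R := ℂ) (ra.left j) • mulRightTwist J (c ⊗ₜ[ℂ] ra.right j)
      = ∑ j ∈ ra.index, mulRightTwist J (c ⊗ₜ[ℂ] (Coalgebra.counit (R := ℂ) (ra.left j) • ra.right j)) := by
        refine Finset.sum_congr rfl fun j _ => ?_
        rw [TensorProduct.tmul_smul, map_smul]
    _ = mulRightTwist J (c ⊗ₜ[ℂ] a) := by
        rw [← map_sum, ← TensorProduct.tmul_sum, sum_counit_smul_right]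

lemma twist_right (Kinv : B ⊗[ℂ] B →ₗ[ℂ] ℂ) (J Jinv : A ⊗[ℂ] A →ₗ[ℂ] ℂ)
    (hJinv : Jinv = Kinv ∘ₗ TensorProduct.map (π : A →ₗ[ℂ] B) (π : A →ₗ[ℂ] B))
    (hKiR : ∀ b : B, Kinv (b ⊗ₜ[ℂ] (1 : B)) = Coalgebra.counit (R := ℂ) b) (c : A)
    (hc1 : TensorProduct.map (π : A →ₗ[ℂ] B) LinearMap.id (Coalgebra.comul (R := ℂ) c) =
      (1 : B) ⊗ₜ[ℂ] c) (a : A) :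
    twistMul Jinv J (a ⊗ₜ[ℂ] c) = mulRightTwist J (a ⊗ₜ[ℂ] c) := by
  have rc := Coalgebra.Repr.arbitrary ℂ c
  have ra := Coalgebra.Repr.arbitrary ℂ a
  rw [twistMul_apply', comul_tmul_repr a c ra rc]
  simp only [map_sum, TensorProduct.map_tmul, TensorProduct.lid_tmul]
  have step : ∀ j ∈ ra.index,
      ∑ i ∈ rc.index, Jinv (ra.left j ⊗ₜ[ℂ] rc.left i) • mulRightTwist J (ra.right j ⊗ₜ[ℂ] rc.right i)
      = Coalgebra.counit (R := ℂ) (ra.left j) • mulRightTwist J (ra.right j ⊗ₜ[ℂ] c) := by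
    intro j _
    have key := apply_hc1 π c hc1 rc
      ((TensorProduct.lid ℂ A).toLinearMap ∘ₗ
        TensorProduct.map (Kinv ∘ₗ TensorProduct.mk ℂ B B (π (ra.left j)))
          (mulRightTwist J ∘ₗ TensorProduct.mk ℂ A A (ra.right j)))
    simp only [LinearMap.coe_comp, Function.comp_apply, LinearEquiv.coe_coe,
      TensorProduct.map_tmul, TensorProduct.mk_apply,
      TensorProduct.lid_tmul] at key
    rw [hJinv]
    simp only [LinearMap.coe_comp, Function.comp_apply, TensorProduct.map_tmul,
      BialgHom.coe_toLinearMap]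
    have hco : ∀ x : A, (π : A →ₗ[ℂ] B) x = π x := fun x => rfl
    rw [key, hKiR, CoalgHomClass.counit_comp_apply]
  rw [Finset.sum_congr rfl step]
  calc ∑ j ∈ ra.index, Coalgebra.counit (R := ℂ) (ra.left j) • mulRightTwist J (ra.right j ⊗ₜ[ℂ] c)
      = ∑ j ∈ ra.index, mulRightTwist J ((Coalgebra.counit (R := ℂ) (ra.left j) • ra.right j) ⊗ₜ[ℂ] c) := by
        refine Finset.sum_congr rfl fun j _ => ?_
        rw [← TensorProduct.smul_tmul', map_smul]
    _ = mulRightTwist J (a ⊗ₜ[ℂ] c) := by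
        rw [← map_sum, ← TensorProduct.sum_tmul, sum_counit_smul_right]

end Main

end PCCAux

/-- Let `π : A → B` be a surjective homomorphism of Hopf algebras over `ℂ` with `A`
commutative, `K` a Hopf 2-cocycle for `B` (with convolution inverse `Kinv`), and
`J := K ∘ (π ⊗ π)` its pullback to `A` (with `Jinv := Kinv ∘ (π ⊗ π)`). If `c ∈ A`
satisfies `(π ⊗ id)(Δ(c)) = 1 ⊗ c` and `(id ⊗ π)(Δ(c)) = c ⊗ 1`, then `c` is central
in `_J A_J`; in fact `_J m_J(c⊗a) = ca = _J m_J(a⊗c)` for every `a ∈ A`. -/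
theorem pullback_coinvariant_central {A B : Type} [CommRing A] [HopfAlgebra ℂ A]
    [Ring B] [HopfAlgebra ℂ B]
    (π : A →ₐc[ℂ] B) (hπ : Function.Surjective π)
    (K Kinv : B ⊗[ℂ] B →ₗ[ℂ] ℂ) (hK : IsHopf2Cocycle K Kinv)
    (J Jinv : A ⊗[ℂ] A →ₗ[ℂ] ℂ)
    (hJ : J = K ∘ₗ TensorProduct.map (π : A →ₗ[ℂ] B) (π : A →ₗ[ℂ] B))
    (hJinv : Jinv = Kinv ∘ₗ TensorProduct.map (π : A →ₗ[ℂ] B) (π : A →ₗ[ℂ] B))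
    (c : A)
    (hc1 : TensorProduct.map (π : A →ₗ[ℂ] B) LinearMap.id (Coalgebra.comul (R := ℂ) c) =
      (1 : B) ⊗ₜ[ℂ] c)
    (hc2 : TensorProduct.map LinearMap.id (π : A →ₗ[ℂ] B) (Coalgebra.comul (R := ℂ) c) =
      c ⊗ₜ[ℂ] (1 : B)) :
    ∀ a : A, twistMul Jinv J (c ⊗ₜ[ℂ] a) = c * a ∧
      twistMul Jinv J (a ⊗ₜ[ℂ] c) = c * a := by
  intro a
  have hKi := PCCAux.Kinv_units K Kinv hK.1 hK.2.2.2
  constructor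
  · rw [PCCAux.twist_left π Kinv J Jinv hJinv (fun b => (hKi b).1) c hc1 a,
      PCCAux.mulRightTwist_c_left π K J hJ (fun b => (hK.2.2.2 b).2) c hc2 a]
  · rw [PCCAux.twist_right π Kinv J Jinv hJinv (fun b => (hKi b).2) c hc1 a,
      PCCAux.mulRightTwist_c_right π K J hJ (fun b => (hK.2.2.2 b).1) c hc2 a, mul_comm]


end
end

section
/- Let A be a Hopf algebra over ℂ, J a Hopf 2-cocycle for A, and χ : A → ℂ an algebra homomorphism (a character). Then the map a ↦ Σ a₁ ⊗ χ(a₂) a₃, i.e., (id ⊗ ((χ ⊗ id)∘Δ)) ∘ Δ, is an injective algebra homomorphism from the twisted Hopf algebra _J A_J to the tensor product algebra _J A ⊗ A_J. -/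
open TensorProduct LinearMap

noncomputable section

set_option linter.unusedSectionVars false


section Gen
variable {M N P W M₁ M₂ N₁ N₂ : Type}
  [AddCommGroup M] [AddCommGroup N] [AddCommGroup P] [AddCommGroup W]
  [AddCommGroup M₁] [AddCommGroup M₂] [AddCommGroup N₁] [AddCommGroup N₂]
  [Module ℂ M] [Module ℂ N] [Module ℂ P] [Module ℂ W]
  [Module ℂ M₁] [Module ℂ M₂] [Module ℂ N₁] [Module ℂ N₂]

lemma aux_mapmap (f₂ : M₁ →ₗ[ℂ] N₁) (g₂ : M₂ →ₗ[ℂ] N₂) (f₁ : M →ₗ[ℂ] M₁) (g₁ : N →ₗ[ℂ] M₂)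
    (k : W →ₗ[ℂ] M ⊗[ℂ] N) :
    TensorProduct.map f₂ g₂ ∘ₗ (TensorProduct.map f₁ g₁ ∘ₗ k)
    = TensorProduct.map (f₂ ∘ₗ f₁) (g₂ ∘ₗ g₁) ∘ₗ k := by
  rw [← LinearMap.comp_assoc, ← TensorProduct.map_comp]

lemma aux_lid_nat (f : M →ₗ[ℂ] N) (k : W →ₗ[ℂ] ℂ ⊗[ℂ] M) :
    f ∘ₗ ((TensorProduct.lid ℂ M).toLinearMap ∘ₗ k)
    = (TensorProduct.lid ℂ N).toLinearMap ∘ₗ (TensorProduct.map LinearMap.id f ∘ₗ k) := by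
  have b : f ∘ₗ (TensorProduct.lid ℂ M).toLinearMap
      = (TensorProduct.lid ℂ N).toLinearMap ∘ₗ TensorProduct.map LinearMap.id f := by
    ext c x; simp
  rw [← LinearMap.comp_assoc, b, LinearMap.comp_assoc]

lemma aux_rid_nat (f : M →ₗ[ℂ] N) (k : W →ₗ[ℂ] M ⊗[ℂ] ℂ) :
    f ∘ₗ ((TensorProduct.rid ℂ M).toLinearMap ∘ₗ k)
    = (TensorProduct.rid ℂ N).toLinearMap ∘ₗ (TensorProduct.map f LinearMap.id ∘ₗ k) := by
  have b : f ∘ₗ (TensorProduct.rid ℂ M).toLinearMap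
      = (TensorProduct.rid ℂ N).toLinearMap ∘ₗ TensorProduct.map f LinearMap.id := by
    ext x c; simp
  rw [← LinearMap.comp_assoc, b, LinearMap.comp_assoc]

end Gen

section TwistAux
open Coalgebra

variable {C : Type} [AddCommGroup C] [Module ℂ C] [Coalgebra ℂ C]
variable {A : Type} [Ring A] [Bialgebra ℂ A]

set_option linter.unusedSectionVars false

lemma aux_bridgeL (F : C →ₗ[ℂ] ℂ) (M G : C →ₗ[ℂ] A) :
    (TensorProduct.lid ℂ (A ⊗[ℂ] A)).toLinearMap ∘ₗ TensorProduct.map F (TensorProduct.map M G)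
      ∘ₗ (TensorProduct.assoc ℂ C C C).toLinearMap
    = TensorProduct.map ((TensorProduct.lid ℂ A).toLinearMap ∘ₗ TensorProduct.map F M) G := by
  ext x y z
  simp [TensorProduct.smul_tmul']

lemma aux_bridgeR (F : C →ₗ[ℂ] ℂ) (M G : C →ₗ[ℂ] A) :
    (TensorProduct.rid ℂ (A ⊗[ℂ] A)).toLinearMap ∘ₗ TensorProduct.map (TensorProduct.map M G) F
      ∘ₗ (TensorProduct.assoc ℂ C C C).symm.toLinearMap
    = TensorProduct.map M ((TensorProduct.rid ℂ A).toLinearMap ∘ₗ TensorProduct.map G F) := by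
  ext x y z
  simp [TensorProduct.smul_tmul]

lemma aux_coassocMap :
    TensorProduct.map (LinearMap.id (M := C)) Coalgebra.comul ∘ₗ Coalgebra.comul
    = (TensorProduct.assoc ℂ C C C).toLinearMap ∘ₗ TensorProduct.map Coalgebra.comul LinearMap.id
        ∘ₗ Coalgebra.comul :=
  (Coalgebra.coassoc (R := ℂ)).symm

lemma aux_coassocMap' :
    TensorProduct.map Coalgebra.comul (LinearMap.id (M := C)) ∘ₗ Coalgebra.comul
    = (TensorProduct.assoc ℂ C C C).symm.toLinearMap ∘ₗ
        TensorProduct.map LinearMap.id Coalgebra.comul ∘ₗ Coalgebra.comul := by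
  rw [aux_coassocMap, ← LinearMap.comp_assoc, ← LinearMap.comp_assoc]
  simp [LinearMap.comp_assoc]

lemma aux_lemB (F : C →ₗ[ℂ] ℂ) (M G : C →ₗ[ℂ] A) :
    (TensorProduct.lid ℂ (A ⊗[ℂ] A)).toLinearMap ∘ₗ
      TensorProduct.map F (TensorProduct.map M G ∘ₗ Coalgebra.comul) ∘ₗ Coalgebra.comul
    = TensorProduct.map ((TensorProduct.lid ℂ A).toLinearMap ∘ₗ TensorProduct.map F M
        ∘ₗ Coalgebra.comul) G ∘ₗ Coalgebra.comul := by
  have e1 : TensorProduct.map F (TensorProduct.map M G ∘ₗ Coalgebra.comul)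
      = TensorProduct.map F (TensorProduct.map M G) ∘ₗ
          TensorProduct.map (LinearMap.id (M := C)) Coalgebra.comul := by
    rw [← TensorProduct.map_comp, LinearMap.comp_id]
  have e3 : TensorProduct.map ((TensorProduct.lid ℂ A).toLinearMap ∘ₗ TensorProduct.map F M
        ∘ₗ Coalgebra.comul) G
      = TensorProduct.map ((TensorProduct.lid ℂ A).toLinearMap ∘ₗ TensorProduct.map F M) G ∘ₗ
          TensorProduct.map Coalgebra.comul (LinearMap.id (M := C)) := by
    rw [← TensorProduct.map_comp, LinearMap.comp_id, LinearMap.comp_assoc]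
  rw [e1, e3, LinearMap.comp_assoc, aux_coassocMap, ← aux_bridgeL F M G]
  simp only [LinearMap.comp_assoc]

lemma aux_lemB' (F : C →ₗ[ℂ] ℂ) (M G : C →ₗ[ℂ] A) :
    (TensorProduct.rid ℂ (A ⊗[ℂ] A)).toLinearMap ∘ₗ
      TensorProduct.map (TensorProduct.map M G ∘ₗ Coalgebra.comul) F ∘ₗ Coalgebra.comul
    = TensorProduct.map M ((TensorProduct.rid ℂ A).toLinearMap ∘ₗ TensorProduct.map G F
        ∘ₗ Coalgebra.comul) ∘ₗ Coalgebra.comul := by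
  have e1 : TensorProduct.map (TensorProduct.map M G ∘ₗ Coalgebra.comul) F
      = TensorProduct.map (TensorProduct.map M G) F ∘ₗ
          TensorProduct.map Coalgebra.comul (LinearMap.id (M := C)) := by
    rw [← TensorProduct.map_comp, LinearMap.comp_id]
  have e3 : TensorProduct.map M ((TensorProduct.rid ℂ A).toLinearMap ∘ₗ TensorProduct.map G F
        ∘ₗ Coalgebra.comul)
      = TensorProduct.map M ((TensorProduct.rid ℂ A).toLinearMap ∘ₗ TensorProduct.map G F) ∘ₗ
          TensorProduct.map (LinearMap.id (M := C)) Coalgebra.comul := by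
    rw [← TensorProduct.map_comp, LinearMap.comp_id, LinearMap.comp_assoc]
  rw [e1, e3, LinearMap.comp_assoc, aux_coassocMap', ← aux_bridgeR F M G]
  simp only [LinearMap.comp_assoc]

/-- naturality of `tensorTensorTensorComm` -/
lemma aux_ttc_nat {M₁ M₂ M₃ M₄ N₁ N₂ N₃ N₄ : Type}
    [AddCommGroup M₁] [AddCommGroup M₂] [AddCommGroup M₃] [AddCommGroup M₄]
    [AddCommGroup N₁] [AddCommGroup N₂] [AddCommGroup N₃] [AddCommGroup N₄]
    [Module ℂ M₁] [Module ℂ M₂] [Module ℂ M₃] [Module ℂ M₄]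
    [Module ℂ N₁] [Module ℂ N₂] [Module ℂ N₃] [Module ℂ N₄]
    (f₁ : M₁ →ₗ[ℂ] N₁) (f₂ : M₂ →ₗ[ℂ] N₂) (f₃ : M₃ →ₗ[ℂ] N₃) (f₄ : M₄ →ₗ[ℂ] N₄) :
    (TensorProduct.tensorTensorTensorComm ℂ N₁ N₂ N₃ N₄).toLinearMap ∘ₗ
      TensorProduct.map (TensorProduct.map f₁ f₂) (TensorProduct.map f₃ f₄)
    = TensorProduct.map (TensorProduct.map f₁ f₃) (TensorProduct.map f₂ f₄) ∘ₗ
        (TensorProduct.tensorTensorTensorComm ℂ M₁ M₂ M₃ M₄).toLinearMap := by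
  ext x y z w
  simp

end TwistAux


section Bi
variable {A : Type} [Ring A] [Bialgebra ℂ A]

lemma aux_lTensorA (f : A →ₗ[ℂ] A) :
    LinearMap.lTensor A f = TensorProduct.map LinearMap.id f := rfl

lemma aux_comulAA :
    (Coalgebra.comul (R := ℂ) (A := A ⊗[ℂ] A))
    = (TensorProduct.tensorTensorTensorComm ℂ A A A A).toLinearMap ∘ₗ
        TensorProduct.map Coalgebra.comul Coalgebra.comul := rfl

lemma aux_mulAA :
    LinearMap.mul' ℂ (A ⊗[ℂ] A)
    = TensorProduct.map (LinearMap.mul' ℂ A) (LinearMap.mul' ℂ A) ∘ₗ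
        (TensorProduct.tensorTensorTensorComm ℂ A A A A).toLinearMap := by
  ext a b c d
  simp [Algebra.TensorProduct.tmul_mul_tmul]

lemma aux_comul_mul :
    (Coalgebra.comul (R := ℂ) (A := A)) ∘ₗ LinearMap.mul' ℂ A
    = TensorProduct.map (LinearMap.mul' ℂ A) (LinearMap.mul' ℂ A) ∘ₗ
        (Coalgebra.comul (R := ℂ) (A := A ⊗[ℂ] A)) := by
  ext a b
  simp only [AlgebraTensorModule.curry_apply, curry_apply, coe_restrictScalars,
    LinearMap.coe_comp, Function.comp_apply, LinearMap.mul'_apply, Bialgebra.comul_mul]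
  rw [← LinearMap.mul'_apply (R := ℂ) (a := Coalgebra.comul a) (b := Coalgebra.comul b), aux_mulAA]
  rfl

lemma aux_chiM (χ : A →ₐ[ℂ] ℂ) :
    χ.toLinearMap ∘ₗ LinearMap.mul' ℂ A
    = LinearMap.mul' ℂ ℂ ∘ₗ TensorProduct.map χ.toLinearMap χ.toLinearMap := by
  ext a b; simp

end Bi

section Psi
variable {A : Type} [Ring A] [Bialgebra ℂ A]

/-- `ψ(a) = Σ χ(a₁) a₂`. -/
noncomputable def auxPsi (χ : A →ₐ[ℂ] ℂ) : A →ₗ[ℂ] A :=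
  (TensorProduct.lid ℂ A).toLinearMap ∘ₗ
    TensorProduct.map χ.toLinearMap LinearMap.id ∘ₗ Coalgebra.comul

/-- bridge: `lid ∘ (χ ⊗ id_{A⊗A}) ∘ assoc = (lid ∘ (χ ⊗ id)) ⊗ id`, with tail. -/
lemma aux_bridgePsi (χ : A →ₐ[ℂ] ℂ) {W : Type} [AddCommGroup W] [Module ℂ W]
    (k : W →ₗ[ℂ] (A ⊗[ℂ] A) ⊗[ℂ] A) :
    (TensorProduct.lid ℂ (A ⊗[ℂ] A)).toLinearMap ∘ₗ
      (TensorProduct.map χ.toLinearMap (LinearMap.id (M := A ⊗[ℂ] A)) ∘ₗ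
        ((TensorProduct.assoc ℂ A A A).toLinearMap ∘ₗ k))
    = TensorProduct.map ((TensorProduct.lid ℂ A).toLinearMap ∘ₗ
        TensorProduct.map χ.toLinearMap LinearMap.id) LinearMap.id ∘ₗ k := by
  have b : (TensorProduct.lid ℂ (A ⊗[ℂ] A)).toLinearMap ∘ₗ
      (TensorProduct.map χ.toLinearMap (LinearMap.id (M := A ⊗[ℂ] A)) ∘ₗ
        (TensorProduct.assoc ℂ A A A).toLinearMap)
      = TensorProduct.map ((TensorProduct.lid ℂ A).toLinearMap ∘ₗ
          TensorProduct.map χ.toLinearMap LinearMap.id) LinearMap.id := by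
    ext x y z; simp [TensorProduct.smul_tmul']
  rw [← b]; simp only [LinearMap.comp_assoc]

lemma aux_comul_psi (χ : A →ₐ[ℂ] ℂ) :
    Coalgebra.comul ∘ₗ auxPsi χ
    = TensorProduct.map (auxPsi χ) LinearMap.id ∘ₗ Coalgebra.comul := by
  unfold auxPsi
  rw [aux_lid_nat, aux_mapmap]
  have r1 : TensorProduct.map (LinearMap.id ∘ₗ χ.toLinearMap)
        ((Coalgebra.comul (R := ℂ) (A := A)) ∘ₗ LinearMap.id) ∘ₗ Coalgebra.comul
      = TensorProduct.map χ.toLinearMap (LinearMap.id (M := A ⊗[ℂ] A)) ∘ₗ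
          (TensorProduct.map LinearMap.id Coalgebra.comul ∘ₗ Coalgebra.comul) := by
    rw [aux_mapmap]; simp
  rw [r1, aux_coassocMap, aux_bridgePsi, aux_mapmap]
  simp [LinearMap.comp_assoc]

/-- bridge for `ψ ∘ m`. -/
lemma aux_bridgePsiMul (χ : A →ₐ[ℂ] ℂ) {W : Type} [AddCommGroup W] [Module ℂ W]
    (k : W →ₗ[ℂ] (A ⊗[ℂ] A) ⊗[ℂ] (A ⊗[ℂ] A)) :
    (TensorProduct.lid ℂ A).toLinearMap ∘ₗ
      (TensorProduct.map (LinearMap.mul' ℂ ℂ ∘ₗ TensorProduct.map χ.toLinearMap χ.toLinearMap)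
        (LinearMap.mul' ℂ A) ∘ₗ
        ((TensorProduct.tensorTensorTensorComm ℂ A A A A).toLinearMap ∘ₗ k))
    = LinearMap.mul' ℂ A ∘ₗ
        (TensorProduct.map
          ((TensorProduct.lid ℂ A).toLinearMap ∘ₗ TensorProduct.map χ.toLinearMap LinearMap.id)
          ((TensorProduct.lid ℂ A).toLinearMap ∘ₗ TensorProduct.map χ.toLinearMap LinearMap.id)
          ∘ₗ k) := by
  have b : (TensorProduct.lid ℂ A).toLinearMap ∘ₗ
      TensorProduct.map (LinearMap.mul' ℂ ℂ ∘ₗ TensorProduct.map χ.toLinearMap χ.toLinearMap)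
        (LinearMap.mul' ℂ A) ∘ₗ
        (TensorProduct.tensorTensorTensorComm ℂ A A A A).toLinearMap
      = LinearMap.mul' ℂ A ∘ₗ
        TensorProduct.map
          ((TensorProduct.lid ℂ A).toLinearMap ∘ₗ TensorProduct.map χ.toLinearMap LinearMap.id)
          ((TensorProduct.lid ℂ A).toLinearMap ∘ₗ TensorProduct.map χ.toLinearMap LinearMap.id)
        := by
    ext a b c d
    simp [TensorProduct.smul_tmul', smul_smul, mul_comm]
  conv_rhs => rw [← LinearMap.comp_assoc]
  rw [← b]; simp only [LinearMap.comp_assoc]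

lemma aux_psi_mul (χ : A →ₐ[ℂ] ℂ) :
    auxPsi χ ∘ₗ LinearMap.mul' ℂ A
    = LinearMap.mul' ℂ A ∘ₗ TensorProduct.map (auxPsi χ) (auxPsi χ) := by
  unfold auxPsi
  simp only [LinearMap.comp_assoc]
  rw [aux_comul_mul, aux_comulAA, aux_mapmap]
  have r1 : TensorProduct.map (χ.toLinearMap ∘ₗ LinearMap.mul' ℂ A)
        (LinearMap.id ∘ₗ LinearMap.mul' ℂ A) ∘ₗ
        ((TensorProduct.tensorTensorTensorComm ℂ A A A A).toLinearMap ∘ₗ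
          TensorProduct.map Coalgebra.comul Coalgebra.comul)
      = TensorProduct.map (LinearMap.mul' ℂ ℂ ∘ₗ TensorProduct.map χ.toLinearMap χ.toLinearMap)
          (LinearMap.mul' ℂ A) ∘ₗ
          ((TensorProduct.tensorTensorTensorComm ℂ A A A A).toLinearMap ∘ₗ
            TensorProduct.map Coalgebra.comul Coalgebra.comul) := by
    rw [aux_chiM]; simp
  rw [r1, aux_bridgePsiMul, ← TensorProduct.map_comp]
  simp only [LinearMap.comp_assoc]

end Psi
section Phi
open Coalgebra
variable {A : Type} [Ring A] [Bialgebra ℂ A]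

set_option linter.unusedSectionVars false

lemma aux_lTensor {M N P : Type} [AddCommGroup M] [AddCommGroup N] [AddCommGroup P]
    [Module ℂ M] [Module ℂ N] [Module ℂ P] (f : M →ₗ[ℂ] N) :
    LinearMap.lTensor P f = TensorProduct.map LinearMap.id f := rfl

lemma aux_ttc_nat_t {M₁ M₂ M₃ M₄ N₁ N₂ N₃ N₄ W : Type}
    [AddCommGroup M₁] [AddCommGroup M₂] [AddCommGroup M₃] [AddCommGroup M₄]
    [AddCommGroup N₁] [AddCommGroup N₂] [AddCommGroup N₃] [AddCommGroup N₄] [AddCommGroup W]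
    [Module ℂ M₁] [Module ℂ M₂] [Module ℂ M₃] [Module ℂ M₄]
    [Module ℂ N₁] [Module ℂ N₂] [Module ℂ N₃] [Module ℂ N₄] [Module ℂ W]
    (f₁ : M₁ →ₗ[ℂ] N₁) (f₂ : M₂ →ₗ[ℂ] N₂) (f₃ : M₃ →ₗ[ℂ] N₃) (f₄ : M₄ →ₗ[ℂ] N₄)
    (k : W →ₗ[ℂ] (M₁ ⊗[ℂ] M₂) ⊗[ℂ] (M₃ ⊗[ℂ] M₄)) :
    (TensorProduct.tensorTensorTensorComm ℂ N₁ N₂ N₃ N₄).toLinearMap ∘ₗ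
      (TensorProduct.map (TensorProduct.map f₁ f₂) (TensorProduct.map f₃ f₄) ∘ₗ k)
    = TensorProduct.map (TensorProduct.map f₁ f₃) (TensorProduct.map f₂ f₄) ∘ₗ
        ((TensorProduct.tensorTensorTensorComm ℂ M₁ M₂ M₃ M₄).toLinearMap ∘ₗ k) := by
  conv_rhs => rw [← LinearMap.comp_assoc]
  rw [← aux_ttc_nat f₁ f₂ f₃ f₄]; simp only [LinearMap.comp_assoc]

/-- `Φ(a) = Σ a₁ ⊗ χ(a₂) a₃`. -/
noncomputable def auxPhi (χ : A →ₐ[ℂ] ℂ) : A →ₗ[ℂ] A ⊗[ℂ] A :=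
  TensorProduct.map LinearMap.id (auxPsi χ) ∘ₗ Coalgebra.comul

lemma aux_phi_mul (χ : A →ₐ[ℂ] ℂ) :
    auxPhi χ ∘ₗ LinearMap.mul' ℂ A
    = TensorProduct.map (LinearMap.mul' ℂ A)
        (LinearMap.mul' ℂ A ∘ₗ TensorProduct.map (auxPsi χ) (auxPsi χ)) ∘ₗ
        Coalgebra.comul := by
  unfold auxPhi
  simp only [LinearMap.comp_assoc]
  rw [aux_comul_mul, aux_mapmap, aux_psi_mul]
  simp only [LinearMap.id_comp]

lemma aux_comul_tensor_psi (χ : A →ₐ[ℂ] ℂ) :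
    (Coalgebra.comul (R := ℂ) (A := A ⊗[ℂ] A)) ∘ₗ TensorProduct.map (auxPsi χ) (auxPsi χ)
    = TensorProduct.map (TensorProduct.map (auxPsi χ) (auxPsi χ)) LinearMap.id ∘ₗ
        Coalgebra.comul := by
  rw [aux_comulAA]
  simp only [LinearMap.comp_assoc]
  rw [← TensorProduct.map_comp, aux_comul_psi, TensorProduct.map_comp, aux_ttc_nat_t]
  simp only [TensorProduct.map_id, LinearMap.comp_assoc]

lemma aux_mulRightTwist_psi (χ : A →ₐ[ℂ] ℂ) (J : A ⊗[ℂ] A →ₗ[ℂ] ℂ) :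
    mulRightTwist J ∘ₗ TensorProduct.map (auxPsi χ) (auxPsi χ)
    = (TensorProduct.rid ℂ A).toLinearMap ∘ₗ
        TensorProduct.map (LinearMap.mul' ℂ A ∘ₗ TensorProduct.map (auxPsi χ) (auxPsi χ)) J ∘ₗ
        Coalgebra.comul := by
  unfold mulRightTwist
  simp only [LinearMap.comp_assoc]
  rw [aux_comul_tensor_psi, aux_mapmap]
  simp only [LinearMap.comp_id]

lemma aux_phi_mulRightTwist (χ : A →ₐ[ℂ] ℂ) (J : A ⊗[ℂ] A →ₗ[ℂ] ℂ) :
    auxPhi χ ∘ₗ mulRightTwist J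
    = TensorProduct.map (LinearMap.mul' ℂ A)
        (mulRightTwist J ∘ₗ TensorProduct.map (auxPsi χ) (auxPsi χ)) ∘ₗ
        Coalgebra.comul := by
  conv_lhs => rw [mulRightTwist]
  rw [aux_rid_nat, aux_mapmap, aux_phi_mul]
  simp only [LinearMap.id_comp]
  rw [aux_lemB' J (LinearMap.mul' ℂ A)
    (LinearMap.mul' ℂ A ∘ₗ TensorProduct.map (auxPsi χ) (auxPsi χ)),
    ← aux_mulRightTwist_psi]

lemma aux_twistMul (J Jinv : A ⊗[ℂ] A →ₗ[ℂ] ℂ) :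
    twistMul Jinv J
    = (TensorProduct.lid ℂ A).toLinearMap ∘ₗ
        TensorProduct.map Jinv (mulRightTwist J) ∘ₗ Coalgebra.comul := by
  unfold twistMul mulRightTwist
  simp only [aux_lTensor, LinearMap.comp_assoc, aux_mapmap, LinearMap.id_comp,
    LinearMap.comp_id]

lemma aux_main (χ : A →ₐ[ℂ] ℂ) (J Jinv : A ⊗[ℂ] A →ₗ[ℂ] ℂ) :
    auxPhi χ ∘ₗ twistMul Jinv J
    = TensorProduct.map (mulLeftTwist Jinv) (mulRightTwist J) ∘ₗ
        (TensorProduct.tensorTensorTensorComm ℂ A A A A).toLinearMap ∘ₗ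
        TensorProduct.map (auxPhi χ) (auxPhi χ) := by
  rw [aux_twistMul, aux_lid_nat, aux_mapmap]
  simp only [LinearMap.id_comp]
  rw [aux_phi_mulRightTwist, aux_lemB Jinv (LinearMap.mul' ℂ A)
    (mulRightTwist J ∘ₗ TensorProduct.map (auxPsi χ) (auxPsi χ))]
  unfold mulLeftTwist
  conv_rhs => rw [auxPhi, TensorProduct.map_comp, aux_ttc_nat_t]
  simp only [TensorProduct.map_id]
  rw [aux_mapmap, ← aux_comulAA]
  simp only [LinearMap.id_comp, LinearMap.comp_id, LinearMap.comp_assoc]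

end Phi
section Inj
open Coalgebra
variable {A : Type} [Ring A] [HopfAlgebra ℂ A]

set_option linter.unusedSectionVars false

/-- right translation `ρ_f(a) = Σ a₁ f(a₂)` -/
noncomputable def auxRho (f : A →ₗ[ℂ] ℂ) : A →ₗ[ℂ] A :=
  (TensorProduct.rid ℂ A).toLinearMap ∘ₗ TensorProduct.map LinearMap.id f ∘ₗ Coalgebra.comul

lemma aux_rho_counit : auxRho (Coalgebra.counit (R := ℂ) (A := A)) = LinearMap.id := by
  apply LinearMap.ext; intro x
  simp only [auxRho, LinearMap.coe_comp, Function.comp_apply, LinearEquiv.coe_coe,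
    LinearMap.id_coe, id_eq]
  rw [show TensorProduct.map LinearMap.id (Coalgebra.counit (R := ℂ) (A := A))
        (Coalgebra.comul x)
      = (Coalgebra.counit (R := ℂ) (A := A)).lTensor A (Coalgebra.comul x) from rfl,
    Coalgebra.lTensor_counit_comul]
  simp

lemma aux_rho_comp (f g : A →ₗ[ℂ] ℂ) :
    auxRho f ∘ₗ auxRho g
    = auxRho (LinearMap.mul' ℂ ℂ ∘ₗ TensorProduct.map f g ∘ₗ Coalgebra.comul) := by
  have b : (TensorProduct.rid ℂ A).toLinearMap ∘ₗ
        ((TensorProduct.rid ℂ (A ⊗[ℂ] ℂ)).toLinearMap ∘ₗ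
          TensorProduct.map (TensorProduct.map (LinearMap.id (M := A)) f) g)
      = (TensorProduct.rid ℂ A).toLinearMap ∘ₗ
          (TensorProduct.map (LinearMap.id (M := A))
            (LinearMap.mul' ℂ ℂ ∘ₗ TensorProduct.map f g) ∘ₗ
            (TensorProduct.assoc ℂ A A A).toLinearMap) := by
    ext x y z
    simp [smul_smul, mul_comm]
  unfold auxRho
  simp only [LinearMap.comp_assoc]
  rw [aux_rid_nat (f := (Coalgebra.comul (R := ℂ) (A := A))), aux_mapmap,
    aux_rid_nat (f := TensorProduct.map (LinearMap.id (M := A)) f), aux_mapmap]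
  simp only [LinearMap.id_comp, LinearMap.comp_id]
  have e_split : TensorProduct.map
        (TensorProduct.map (LinearMap.id (M := A)) f ∘ₗ Coalgebra.comul) g
      = TensorProduct.map (TensorProduct.map (LinearMap.id (M := A)) f) g ∘ₗ
          TensorProduct.map Coalgebra.comul LinearMap.id := by
    rw [← TensorProduct.map_comp, LinearMap.comp_id]
  rw [e_split]
  simp only [← LinearMap.comp_assoc] at b ⊢
  rw [b]
  simp only [LinearMap.comp_assoc]
  rw [← aux_coassocMap, aux_mapmap]
  simp only [LinearMap.id_comp, LinearMap.comp_assoc]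

lemma aux_counit_psi (χ : A →ₐ[ℂ] ℂ) :
    (Coalgebra.counit (R := ℂ) (A := A)) ∘ₗ auxPsi χ = χ.toLinearMap := by
  have c1 : (Coalgebra.counit (R := ℂ) (A := A)) ∘ₗ
        ((TensorProduct.lid ℂ A).toLinearMap ∘ₗ
          TensorProduct.map χ.toLinearMap LinearMap.id)
      = χ.toLinearMap ∘ₗ ((TensorProduct.rid ℂ A).toLinearMap ∘ₗ
          TensorProduct.map LinearMap.id Coalgebra.counit) := by
    ext a b
    simp [mul_comm]
  unfold auxPsi
  simp only [← LinearMap.comp_assoc] at c1 ⊢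
  rw [c1]
  simp only [LinearMap.comp_assoc]
  rw [show χ.toLinearMap ∘ₗ ((TensorProduct.rid ℂ A).toLinearMap ∘ₗ
      (TensorProduct.map LinearMap.id Coalgebra.counit ∘ₗ Coalgebra.comul))
    = χ.toLinearMap ∘ₗ auxRho Coalgebra.counit from rfl, aux_rho_counit]
  simp

lemma aux_counit_phi (χ : A →ₐ[ℂ] ℂ) :
    (TensorProduct.rid ℂ A).toLinearMap ∘ₗ
      TensorProduct.map LinearMap.id Coalgebra.counit ∘ₗ auxPhi χ
    = auxRho χ.toLinearMap := by
  unfold auxPhi auxRho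
  rw [aux_mapmap, aux_counit_psi]
  simp only [LinearMap.id_comp]

lemma aux_chiS (χ : A →ₐ[ℂ] ℂ) :
    LinearMap.mul' ℂ ℂ ∘ₗ
      TensorProduct.map (χ.toLinearMap ∘ₗ HopfAlgebra.antipode (R := ℂ)) χ.toLinearMap ∘ₗ
      Coalgebra.comul
    = Coalgebra.counit := by
  have e1 : TensorProduct.map (χ.toLinearMap ∘ₗ HopfAlgebra.antipode (R := ℂ) (A := A))
        χ.toLinearMap
      = TensorProduct.map χ.toLinearMap χ.toLinearMap ∘ₗ
          TensorProduct.map (HopfAlgebra.antipode (R := ℂ)) LinearMap.id := by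
    rw [← TensorProduct.map_comp, LinearMap.comp_id]
  rw [e1]
  simp only [← LinearMap.comp_assoc]
  rw [← aux_chiM]
  simp only [LinearMap.comp_assoc]
  have hr : LinearMap.mul' ℂ A ∘ₗ
        (TensorProduct.map (HopfAlgebra.antipode (R := ℂ)) (LinearMap.id (M := A)) ∘ₗ
          Coalgebra.comul)
      = Algebra.linearMap ℂ A ∘ₗ Coalgebra.counit :=
    HopfAlgebra.mul_antipode_rTensor_comul
  rw [hr, ← LinearMap.comp_assoc]
  have e2 : χ.toLinearMap ∘ₗ Algebra.linearMap ℂ A = LinearMap.id := by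
    apply LinearMap.ext; intro c
    simp
  rw [e2, LinearMap.id_comp]

lemma aux_phi_injective (χ : A →ₐ[ℂ] ℂ) : Function.Injective (auxPhi χ) := by
  have key : (auxRho (χ.toLinearMap ∘ₗ HopfAlgebra.antipode (R := ℂ)) ∘ₗ
        ((TensorProduct.rid ℂ A).toLinearMap ∘ₗ
          TensorProduct.map LinearMap.id Coalgebra.counit)) ∘ₗ auxPhi χ
      = LinearMap.id := by
    simp only [LinearMap.comp_assoc]
    rw [aux_counit_phi, aux_rho_comp, aux_chiS, aux_rho_counit]
  intro x y hxy
  have hx := LinearMap.congr_fun key x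
  have hy := LinearMap.congr_fun key y
  simp only [LinearMap.coe_comp, Function.comp_apply, LinearMap.id_coe, id_eq] at hx hy
  rw [← hx, ← hy, hxy]

end Inj
/-- Let `A` be a Hopf algebra over `ℂ`, `J` a Hopf 2-cocycle with convolution inverse
`Jinv`, and `χ : A → ℂ` a character. Then the map `a ↦ Σ a₁ ⊗ χ(a₂) a₃`, i.e.,
`(id ⊗ ((χ ⊗ id)∘Δ)) ∘ Δ`, is an injective algebra homomorphism from `_J A_J` to the
tensor product algebra `_J A ⊗ A_J`. -/
theorem twisted_comul_translation_injective_algHom {A : Type} [Ring A] [HopfAlgebra ℂ A]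
    (J Jinv : A ⊗[ℂ] A →ₗ[ℂ] ℂ) (hJ : IsHopf2Cocycle J Jinv)
    (χ : A →ₐ[ℂ] ℂ)
    (Φ : A →ₗ[ℂ] A ⊗[ℂ] A)
    (hΦ : Φ = LinearMap.lTensor A
        ((TensorProduct.lid ℂ A).toLinearMap ∘ₗ
          TensorProduct.map χ.toLinearMap LinearMap.id ∘ₗ Coalgebra.comul) ∘ₗ
      Coalgebra.comul) :
    Function.Injective Φ ∧
    ∀ a b : A,
      Φ (twistMul Jinv J (a ⊗ₜ[ℂ] b)) =
        TensorProduct.map (mulLeftTwist Jinv) (mulRightTwist J)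
          (TensorProduct.tensorTensorTensorComm ℂ A A A A (Φ a ⊗ₜ[ℂ] Φ b)) := by
  have hPhi : Φ = auxPhi χ := by rw [hΦ]; rfl
  subst hPhi
  refine ⟨aux_phi_injective χ, fun a b => ?_⟩
  have h := LinearMap.congr_fun (aux_main χ J Jinv) (a ⊗ₜ[ℂ] b)
  simpa using h

end
end
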